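/- arXiv:2010.04347 — 12 statements merged into one kernel-verified Lean document; each statement's English description precedes it below -/
import Mathlib

section
/- Let f be a real-valued function that is positive and differentiable on an open interval (a,b), and let g be a differentiable function on (a,b) with g(x) ≠ 0 for all x in (a,b). If for every x in (a,b) the truncated-moment identity ∫_a^x t·f(t) dt = g(x)·f(x) holds (with t·f(t) integrable near a), then for every x in (a,b) the density satisfies the differential equation f'(x)/f(x) = (x − g'(x))/g(x). -/
/-- **Lemma 1 (differential-equation form).**
If `f` is positive and differentiable on `(a, b)`, `g` is differentiable and nonvanishing
on `(a, b)`, and the left-truncated first-moment identity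
`∫ t in a..x, t * f t = g x * f x` holds on `(a, b)` (with `t * f t` integrable near `a`),
then `f' x / f x = (x - g' x) / g x` on `(a, b)`. -/
theorem lemma1_diff_eq (a b : ℝ) (hab : a < b) (f g : ℝ → ℝ)
    (hf_pos : ∀ x ∈ Set.Ioo a b, 0 < f x)
    (hf_diff : ∀ x ∈ Set.Ioo a b, DifferentiableAt ℝ f x)
    (hg_diff : ∀ x ∈ Set.Ioo a b, DifferentiableAt ℝ g x)
    (hg_ne : ∀ x ∈ Set.Ioo a b, g x ≠ 0)
    (hint : ∀ x ∈ Set.Ioo a b,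
      IntervalIntegrable (fun t => t * f t) MeasureTheory.volume a x)
    (hid : ∀ x ∈ Set.Ioo a b, (∫ t in a..x, t * f t) = g x * f x) :
    ∀ x ∈ Set.Ioo a b, deriv f x / f x = (x - deriv g x) / g x := by
  intro x hx
  have hopen : IsOpen (Set.Ioo a b) := isOpen_Ioo
  have hcont : ContinuousOn (fun t => t * f t) (Set.Ioo a b) := by
    intro t ht
    exact (continuousAt_id.mul (hf_diff t ht).continuousAt).continuousWithinAt
  have hmeas : StronglyMeasurableAtFilter (fun t => t * f t) (nhds x) :=
    hcont.stronglyMeasurableAtFilter hopen x hx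
  have hctx : ContinuousAt (fun t => t * f t) x :=
    continuousAt_id.mul (hf_diff x hx).continuousAt
  have hF : HasDerivAt (fun y => ∫ t in a..y, t * f t) (x * f x) x :=
    intervalIntegral.integral_hasDerivAt_right (hint x hx) hmeas hctx
  have hG : HasDerivAt (fun y => g y * f y)
      (deriv g x * f x + g x * deriv f x) x :=
    (hg_diff x hx).hasDerivAt.mul (hf_diff x hx).hasDerivAt
  have heq : (fun y => ∫ t in a..y, t * f t) =ᶠ[nhds x] fun y => g y * f y := by
    filter_upwards [hopen.mem_nhds hx] with y hy using hid y hy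
  have hkey : x * f x = deriv g x * f x + g x * deriv f x := by
    rw [← hF.deriv, ← hG.deriv]
    exact heq.deriv_eq
  have hf0 := (hf_pos x hx).ne'
  field_simp [hf0, hg_ne x hx]
  nlinarith [hkey]
end

section
/- Let f be a real-valued function that is positive and differentiable on an open interval (a,b), and let h be a differentiable function on (a,b) with h(x) ≠ 0 for all x in (a,b). If for every x in (a,b) the truncated-moment identity ∫_x^b t·f(t) dt = h(x)·f(x) holds (with t·f(t) integrable near b), then for every x in (a,b) the density satisfies the differential equation f'(x)/f(x) = −(x + h'(x))/h(x). -/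
open Topology Filter MeasureTheory


/-- **Lemma 2 (differential-equation form).**
If `f` is positive and differentiable on `(a, b)`, `h` is differentiable and nonvanishing
on `(a, b)`, and the right-truncated first-moment identity
`∫ t in x..b, t * f t = h x * f x` holds on `(a, b)` (with `t * f t` integrable near `b`),
then `f' x / f x = -(x + h' x) / h x` on `(a, b)`. -/
theorem lemma2_diff_eq (a b : ℝ) (hab : a < b) (f h : ℝ → ℝ)
    (hf_pos : ∀ x ∈ Set.Ioo a b, 0 < f x)
    (hf_diff : ∀ x ∈ Set.Ioo a b, DifferentiableAt ℝ f x)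
    (hh_diff : ∀ x ∈ Set.Ioo a b, DifferentiableAt ℝ h x)
    (hh_ne : ∀ x ∈ Set.Ioo a b, h x ≠ 0)
    (hint : ∀ x ∈ Set.Ioo a b,
      IntervalIntegrable (fun t => t * f t) MeasureTheory.volume x b)
    (hid : ∀ x ∈ Set.Ioo a b, (∫ t in x..b, t * f t) = h x * f x) :
    ∀ x ∈ Set.Ioo a b, deriv f x / f x = -(x + deriv h x) / h x := by
  intro x hx
  have hcf : ContinuousAt f x := (hf_diff x hx).continuousAt
  have hctf : ContinuousAt (fun t => t * f t) x := continuousAt_id.mul hcf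
  -- derivative of G u = ∫ t in b..u, t * f t at x is x * f x
  have hG : HasDerivAt (fun u => ∫ t in b..u, t * f t) (x * f x) x := by
    have hsmaf : StronglyMeasurableAtFilter (fun t => t * f t) (𝓝 x) MeasureTheory.volume :=
      ContinuousAt.stronglyMeasurableAtFilter isOpen_Ioo
        (fun u hu => continuousAt_id.mul (hf_diff u hu).continuousAt) x hx
    have := intervalIntegral.integral_hasDerivAt_right
      ((hint x hx).symm) hsmaf hctf
    simpa using this
  -- derivative of F u = ∫ t in u..b, t * f t at x is -(x * f x)
  have hF : HasDerivAt (fun u => ∫ t in u..b, t * f t) (-(x * f x)) x := by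
    have : (fun u => ∫ t in u..b, t * f t) = fun u => -(∫ t in b..u, t * f t) := by
      funext u; rw [intervalIntegral.integral_symm]
    rw [this]; exact hG.neg
  -- derivative of h * f at x
  have hhf : HasDerivAt (fun u => h u * f u)
      (deriv h x * f x + h x * deriv f x) x :=
    ((hh_diff x hx).hasDerivAt).mul ((hf_diff x hx).hasDerivAt)
  -- the two functions agree on a neighborhood of x
  have heq : (fun u => ∫ t in u..b, t * f t) =ᶠ[𝓝 x] fun u => h u * f u := by
    filter_upwards [isOpen_Ioo.mem_nhds hx] with u hu using hid u hu
  have hF' : HasDerivAt (fun u => h u * f u) (-(x * f x)) x := by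
    exact hF.congr_of_eventuallyEq heq.symm
  have hkey : -(x * f x) = deriv h x * f x + h x * deriv f x :=
    hF'.unique hhf
  have hfx := (hf_pos x hx).ne'
  have hhx := hh_ne x hx
  field_simp
  linarith [mul_comm (deriv f x) (h x), mul_comm (f x) (x + deriv h x)]
end

section
/- Let α > 0 and β > 0, and let f(x) = αβ·exp(−α(x^{−β} − 1))/x^{1+β} for x ∈ (0,1). Then for every x ∈ (0,1], the truncated first moment satisfies ∫_0^x t·f(t) dt = e^α · α^{1/β} · Γ(1 − 1/β; α/x^β), where Γ(s; y) = ∫_y^∞ t^{s−1} e^{−t} dt is the upper incomplete gamma function. -/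
/-- The upper incomplete gamma function `Γ(s; y) = ∫_y^∞ t^(s-1) e^(-t) dt`. -/
noncomputable def uiGamma (s y : ℝ) : ℝ :=
  ∫ t in Set.Ioi y, t ^ (s - 1) * Real.exp (-t)

/-- **Truncated first moment of the unit-Gompertz distribution.**
For `α, β > 0` and the unit-Gompertz density
`f x = α * β * exp (-α * (x ^ (-β) - 1)) / x ^ (1 + β)` on `(0, 1)`, for every
`x ∈ (0, 1]` one has
`∫ t in 0..x, t * f t = e^α * α^(1/β) * Γ(1 - 1/β; α / x^β)`. -/
theorem unitGompertz_truncated_first_moment (α β : ℝ) (hα : 0 < α) (hβ : 0 < β)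
    (f : ℝ → ℝ)
    (hf : f = fun x => α * β * Real.exp (-α * (x ^ (-β) - 1)) / x ^ (1 + β)) :
    ∀ x ∈ Set.Ioc (0:ℝ) 1,
      (∫ t in (0:ℝ)..x, t * f t) =
        Real.exp α * α ^ (1 / β) * uiGamma (1 - 1 / β) (α / x ^ β) := by
  intro x hx
  obtain ⟨hx0, hx1⟩ := hx
  have hβ' : β ≠ 0 := hβ.ne'
  have hxβ : (0:ℝ) < x ^ β := Real.rpow_pos_of_pos hx0 β
  set φ : ℝ → ℝ := fun t => α * t ^ (-β) with hφ
  set φ' : ℝ → ℝ := fun t => α * (-β * t ^ (-β - 1)) with hφ'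
  set g : ℝ → ℝ := fun u => u ^ (1 - 1 / β - 1) * Real.exp (-u) with hg
  -- image of (0, x) under φ
  have himg : φ '' Set.Ioo 0 x = Set.Ioi (α / x ^ β) := by
    ext u
    simp only [Set.mem_image, Set.mem_Ioo, Set.mem_Ioi]
    constructor
    · rintro ⟨t, ⟨ht0, htx⟩, rfl⟩
      have h1 : x ^ (-β) < t ^ (-β) :=
        Real.rpow_lt_rpow_of_neg ht0 htx (neg_neg_of_pos hβ)
      have h2 : α / x ^ β = α * x ^ (-β) := by
        rw [Real.rpow_neg hx0.le, div_eq_mul_inv]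
      rw [h2, hφ]
      exact mul_lt_mul_of_pos_left h1 hα
    · intro hu
      have hu0 : 0 < u := lt_trans (div_pos hα hxβ) hu
      have hau : 0 < α / u := div_pos hα hu0
      refine ⟨(α / u) ^ β⁻¹, ⟨Real.rpow_pos_of_pos hau _, ?_⟩, ?_⟩
      · have h3 : α / u < x ^ β := (div_lt_iff₀ hu0).2 (by
          rw [mul_comm]; exact (div_lt_iff₀ hxβ).1 hu)
        calc (α / u) ^ β⁻¹ < (x ^ β) ^ β⁻¹ :=
              Real.rpow_lt_rpow hau.le h3 (by positivity)
          _ = x := Real.rpow_rpow_inv hx0.le hβ'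
      · show α * ((α / u) ^ β⁻¹) ^ (-β) = u
        have h4 : β⁻¹ * -β = -1 := by field_simp
        rw [← Real.rpow_mul hau.le, h4, Real.rpow_neg_one]
        field_simp
  -- derivative of φ
  have hderiv : ∀ t ∈ Set.Ioo (0:ℝ) x, HasDerivWithinAt φ (φ' t) (Set.Ioo 0 x) t := by
    intro t ht
    exact (((Real.hasDerivAt_rpow_const (p := -β) (Or.inl ht.1.ne')).const_mul
      α)).hasDerivWithinAt
  -- injectivity
  have hinj : Set.InjOn φ (Set.Ioo 0 x) := by
    intro a ha b hb hab
    by_contra hne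
    rcases lt_or_gt_of_ne hne with h | h
    · exact (mul_lt_mul_of_pos_left
        (Real.rpow_lt_rpow_of_neg ha.1 h (neg_neg_of_pos hβ)) hα).ne' hab
    · exact (mul_lt_mul_of_pos_left
        (Real.rpow_lt_rpow_of_neg hb.1 h (neg_neg_of_pos hβ)) hα).ne hab
  -- change of variables
  have hchg : uiGamma (1 - 1 / β) (α / x ^ β) =
      ∫ t in Set.Ioo (0:ℝ) x, |φ' t| • g (φ t) := by
    rw [uiGamma, ← himg]
    exact MeasureTheory.integral_image_eq_integral_abs_deriv_smul
      measurableSet_Ioo hderiv hinj g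
  rw [intervalIntegral.integral_of_le hx0.le,
    MeasureTheory.integral_Ioc_eq_integral_Ioo, hchg,
    ← MeasureTheory.integral_const_mul]
  refine MeasureTheory.setIntegral_congr_fun measurableSet_Ioo (fun t ht => ?_)
  obtain ⟨ht0, htx⟩ := ht
  have htβ : (0:ℝ) < t ^ (-β) := Real.rpow_pos_of_pos ht0 _
  have htβ1 : (0:ℝ) < t ^ (-β - 1) := Real.rpow_pos_of_pos ht0 _
  simp only [smul_eq_mul, hf, hg, hφ, hφ']
  have habs : |α * (-β * t ^ (-β - 1))| = α * β * t ^ (-β - 1) := by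
    rw [abs_mul, abs_mul, abs_of_pos hα, abs_of_pos htβ1, abs_neg, abs_of_pos hβ]
    ring
  have hpow : (α * t ^ (-β)) ^ (1 - 1 / β - 1) = α ^ (-(1/β)) * t := by
    rw [show (1 - 1/β - 1 : ℝ) = -(1/β) by ring,
      Real.mul_rpow hα.le htβ.le, ← Real.rpow_mul ht0.le]
    congr 1
    rw [show -β * -(1/β) = β * (1/β) by ring, mul_one_div_cancel hβ', Real.rpow_one]
  have hexp : Real.exp (-α * (t ^ (-β) - 1)) =
      Real.exp α * Real.exp (-(α * t ^ (-β))) := by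
    rw [← Real.exp_add]; ring_nf
  have htt : t / t ^ (1 + β) = t ^ (-β) := by
    rw [Real.rpow_add ht0, Real.rpow_one, Real.rpow_neg ht0.le]
    field_simp
  have hcancel : α ^ (1/β) * α ^ (-(1/β)) = 1 := by
    rw [← Real.rpow_add hα, add_neg_cancel, Real.rpow_zero]
  have htt2 : t ^ (-β - 1) * t = t ^ (-β) := by
    rw [Real.rpow_sub ht0, Real.rpow_one]
    field_simp
  calc t * (α * β * Real.exp (-α * (t ^ (-β) - 1)) / t ^ (1 + β))
      = α * β * Real.exp (-α * (t ^ (-β) - 1)) * (t / t ^ (1 + β)) := by ring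
    _ = α * β * (Real.exp α * Real.exp (-(α * t ^ (-β)))) * t ^ (-β) := by
        rw [hexp, htt]
    _ = Real.exp α * (α ^ (1/β) * α ^ (-(1/β))) * (α * β) *
          (t ^ (-β - 1) * t) * Real.exp (-(α * t ^ (-β))) := by
        rw [hcancel, htt2]; ring
    _ = Real.exp α * α ^ (1 / β) *
          (|α * (-β * t ^ (-β - 1))| * ((α * t ^ (-β)) ^ (1 - 1 / β - 1) *
            Real.exp (-(α * t ^ (-β))))) := by
        rw [habs, hpow]; ring
end

section
/- Let α > 0 and β > 0, and let f(x) = αβ·exp(−α(x^{−β} − 1))/x^{1+β} for x ∈ (0,1). Define g(x) = (α^{1/β}/(αβ))·exp(α/x^β)·x^{1+β}·Γ(1 − 1/β; α/x^β). Then for every x ∈ (0,1), ∫_0^x t·f(t) dt = g(x)·f(x); equivalently, with F(x) = exp(−α(x^{−β} − 1)), the conditional expectation satisfies E(X | X ≤ x) = g(x)·f(x)/F(x) when X has density f. -/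
/-- **Theorem 1, direct part.** For `α, β > 0`, the unit-Gompertz density
`f x = α * β * exp (-α * (x ^ (-β) - 1)) / x ^ (1 + β)` and the function
`g x = (α^(1/β) / (α * β)) * exp (α / x^β) * x^(1+β) * Γ(1 - 1/β; α / x^β)`
satisfy `∫ t in 0..x, t * f t = g x * f x` for every `x ∈ (0, 1)`; equivalently,
with `F x = exp (-α * (x ^ (-β) - 1))`, the conditional expectation satisfies
`E(X | X ≤ x) = g x * f x / F x`. -/
theorem unitGompertz_left_truncated_identity (α β : ℝ) (hα : 0 < α) (hβ : 0 < β)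
    (f g F : ℝ → ℝ)
    (hf : f = fun x => α * β * Real.exp (-α * (x ^ (-β) - 1)) / x ^ (1 + β))
    (hg : g = fun x => α ^ (1 / β) / (α * β) * Real.exp (α / x ^ β) * x ^ (1 + β) *
      uiGamma (1 - 1 / β) (α / x ^ β))
    (hF : F = fun x => Real.exp (-α * (x ^ (-β) - 1))) :
    ∀ x ∈ Set.Ioo (0:ℝ) 1,
      (∫ t in (0:ℝ)..x, t * f t) = g x * f x ∧
      (∫ t in (0:ℝ)..x, t * f t) / F x = g x * f x / F x := by
  intro x hx
  obtain ⟨hx0, hx1⟩ := hx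
  have hxβ : (0:ℝ) < x ^ β := Real.rpow_pos_of_pos hx0 β
  set y : ℝ := α / x ^ β with hy
  have hy0 : 0 < y := div_pos hα hxβ
  set ψ : ℝ → ℝ := fun t => α * t ^ (-β) with hψ
  have hψ' : ∀ t ∈ Set.Ioo (0:ℝ) x, HasDerivWithinAt ψ (α * (-β * t ^ (-β - 1)))
      (Set.Ioo (0:ℝ) x) t := by
    intro t ht
    exact ((Real.hasDerivAt_rpow_const (Or.inl (ne_of_gt ht.1))).const_mul α).hasDerivWithinAt
  have hanti : ∀ s t, s ∈ Set.Ioo (0:ℝ) x → t ∈ Set.Ioo (0:ℝ) x → s < t → ψ t < ψ s := by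
    intro s t hs ht hst
    have := Real.rpow_lt_rpow_of_neg hs.1 hst (neg_neg_of_pos hβ)
    exact mul_lt_mul_of_pos_left this hα
  have hinj : Set.InjOn ψ (Set.Ioo (0:ℝ) x) := by
    intro s hs t ht h
    rcases lt_trichotomy s t with h' | h' | h'
    · exact absurd h (ne_of_gt (hanti s t hs ht h'))
    · exact h'
    · exact absurd h (ne_of_lt (hanti t s ht hs h'))
  have himg : ψ '' Set.Ioo (0:ℝ) x = Set.Ioi y := by
    ext u
    constructor
    · rintro ⟨t, ht, rfl⟩
      have h1 : x ^ (-β) < t ^ (-β) :=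
        Real.rpow_lt_rpow_of_neg ht.1 ht.2 (neg_neg_of_pos hβ)
      have h2 : y = α * x ^ (-β) := by
        rw [hy, Real.rpow_neg hx0.le, div_eq_mul_inv]
      rw [Set.mem_Ioi, h2]
      exact mul_lt_mul_of_pos_left h1 hα
    · intro hu
      have hu0 : 0 < u := lt_trans hy0 hu
      refine ⟨(α / u) ^ (1 / β), ⟨Real.rpow_pos_of_pos (div_pos hα hu0) _, ?_⟩, ?_⟩
      · have h1 : α / u < x ^ β := by
          rw [div_lt_iff₀ hu0]
          calc α = x ^ β * y := by rw [hy]; field_simp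
          _ < x ^ β * u := mul_lt_mul_of_pos_left hu hxβ
        calc (α / u) ^ (1 / β) < (x ^ β) ^ (1 / β) :=
              Real.rpow_lt_rpow (div_pos hα hu0).le h1 (by positivity)
        _ = x := by
              rw [← Real.rpow_mul hx0.le, mul_one_div, div_self (ne_of_gt hβ), Real.rpow_one]
      · show α * ((α / u) ^ (1 / β)) ^ (-β) = u
        rw [← Real.rpow_mul (div_pos hα hu0).le]
        have h3 : 1 / β * (-β) = -1 := by field_simp
        rw [h3, Real.rpow_neg_one]
        field_simp
  have key : uiGamma (1 - 1 / β) y =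
      ∫ t in Set.Ioo (0:ℝ) x, |α * (-β * t ^ (-β - 1))| *
        ((α * t ^ (-β)) ^ (1 - 1 / β - 1) * Real.exp (-(α * t ^ (-β)))) := by
    rw [uiGamma, ← himg]
    exact MeasureTheory.integral_image_eq_integral_abs_deriv_smul measurableSet_Ioo hψ' hinj _
  have hpt : Set.EqOn (fun t => |α * (-β * t ^ (-β - 1))| *
        ((α * t ^ (-β)) ^ (1 - 1 / β - 1) * Real.exp (-(α * t ^ (-β)))))
      (fun t => (Real.exp (-α) * α ^ (-(1 / β))) * (t * f t)) (Set.Ioo (0:ℝ) x) := by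
    intro t ht
    have ht0 := ht.1
    have htβ : (0:ℝ) < t ^ (-β) := Real.rpow_pos_of_pos ht0 _
    have habs : |α * (-β * t ^ (-β - 1))| = α * β * t ^ (-β - 1) := by
      rw [show α * (-β * t ^ (-β - 1)) = -(α * β * t ^ (-β - 1)) by ring, abs_neg,
        abs_of_pos (by positivity)]
    have hpow : (α * t ^ (-β)) ^ (1 - 1 / β - 1) = α ^ (-(1 / β)) * t := by
      have h1 : (1:ℝ) - 1 / β - 1 = -(1 / β) := by ring
      rw [h1, Real.mul_rpow hα.le htβ.le, ← Real.rpow_mul ht0.le]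
      have h2 : -β * -(1 / β) = 1 := by field_simp
      rw [h2, Real.rpow_one]
    have hexp : Real.exp (-α * (t ^ (-β) - 1)) = Real.exp (-(α * t ^ (-β))) * Real.exp α := by
      rw [← Real.exp_add]; ring_nf
    have hts : t ^ (1 + β) = t * t ^ β := by
      rw [Real.rpow_add ht0, Real.rpow_one]
    have hts2 : t ^ (-β - 1) = (t * t ^ β * t)⁻¹ * t := by
      rw [show (-β - 1 : ℝ) = -(β + 1) by ring, Real.rpow_neg ht0.le, Real.rpow_add ht0,
        Real.rpow_one]
      have htne : t ≠ 0 := ne_of_gt ht0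
      have htβ' : t ^ β ≠ 0 := ne_of_gt (Real.rpow_pos_of_pos ht0 _)
      field_simp
    show |α * (-β * t ^ (-β - 1))| *
        ((α * t ^ (-β)) ^ (1 - 1 / β - 1) * Real.exp (-(α * t ^ (-β)))) =
      (Real.exp (-α) * α ^ (-(1 / β))) * (t * f t)
    rw [habs, hpow, hf]
    simp only
    rw [hexp, hts, hts2, Real.exp_neg α]
    have htne : t ≠ 0 := ne_of_gt ht0
    have htβ' : t ^ β ≠ 0 := ne_of_gt (Real.rpow_pos_of_pos ht0 _)
    field_simp
  have key2 : uiGamma (1 - 1 / β) y =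
      (Real.exp (-α) * α ^ (-(1 / β))) * ∫ t in Set.Ioo (0:ℝ) x, t * f t := by
    rw [key, MeasureTheory.setIntegral_congr_fun measurableSet_Ioo hpt,
      MeasureTheory.integral_const_mul]
  have hIoo : (∫ t in (0:ℝ)..x, t * f t) = ∫ t in Set.Ioo (0:ℝ) x, t * f t := by
    rw [intervalIntegral.integral_of_le hx0.le, MeasureTheory.integral_Ioc_eq_integral_Ioo]
  have hαβne : α ^ (1 / β) ≠ 0 := ne_of_gt (Real.rpow_pos_of_pos hα _)
  have hmain : (∫ t in (0:ℝ)..x, t * f t) =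
      Real.exp α * α ^ (1 / β) * uiGamma (1 - 1 / β) y := by
    rw [key2, Real.exp_neg, Real.rpow_neg hα.le, hIoo]
    field_simp
  have hee : Real.exp (α / x ^ β) * Real.exp (-α * (x ^ (-β) - 1)) = Real.exp α := by
    rw [← Real.exp_add]
    congr 1
    rw [Real.rpow_neg hx0.le]
    field_simp
    ring
  have hx1β : (0:ℝ) < x ^ (1 + β) := Real.rpow_pos_of_pos hx0 _
  have hgfx : g x * f x = Real.exp α * α ^ (1 / β) * uiGamma (1 - 1 / β) y := by
    rw [hg, hf]
    simp only
    have step : α ^ (1 / β) / (α * β) * Real.exp (α / x ^ β) * x ^ (1 + β) *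
        uiGamma (1 - 1 / β) (α / x ^ β) *
        (α * β * Real.exp (-α * (x ^ (-β) - 1)) / x ^ (1 + β)) =
        (Real.exp (α / x ^ β) * Real.exp (-α * (x ^ (-β) - 1))) * α ^ (1 / β) *
        uiGamma (1 - 1 / β) (α / x ^ β) * ((α * β) / (α * β)) * (x ^ (1 + β) / x ^ (1 + β)) := by
      ring
    rw [step, hee, div_self (by positivity : α * β ≠ 0), div_self (ne_of_gt hx1β)]
    ring_nf
    rw [hy, div_eq_mul_inv]
  constructor
  · rw [hmain, hgfx]
  · rw [hmain, hgfx]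
end

section
/- Let α > 0 and β > 0, and define g(x) = (α^{1/β}/(αβ))·exp(α/x^β)·x^{1+β}·Γ(1 − 1/β; α/x^β) for x ∈ (0,1), where Γ(s; y) = ∫_y^∞ t^{s−1} e^{−t} dt. Then g is differentiable on (0,1) and for every x ∈ (0,1), g'(x) = x − g(x)·(αβ/x^{β+1} − (β+1)/x). -/
open Set MeasureTheory Real Filter

lemma uiGamma_integrableOn (s : ℝ) {c : ℝ} (hc : 0 < c) :
    IntegrableOn (fun t : ℝ => t ^ (s - 1) * Real.exp (-t)) (Set.Ioi c) := by
  apply integrable_of_isBigO_exp_neg (b := 1/2) (by norm_num)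
  · apply ContinuousOn.mul
    · exact (continuousOn_id).rpow_const (fun t ht => Or.inl (ne_of_gt (lt_of_lt_of_le hc ht)))
    · exact (Real.continuous_exp.comp continuous_neg).continuousOn
  · have h1 : Tendsto (fun t : ℝ => t ^ (s-1) * Real.exp (-(1/2) * t)) atTop (nhds 0) :=
      tendsto_rpow_mul_exp_neg_mul_atTop_nhds_zero _ _ (by norm_num)
    have h2 : (fun t : ℝ => t ^ (s-1) * Real.exp (-(1/2) * t)) =O[atTop] (fun _ => (1:ℝ)) :=
      h1.isBigO_one ℝ
    have h3 := h2.mul (Asymptotics.isBigO_refl (fun t : ℝ => Real.exp (-(1/2) * t)) atTop)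
    simp only [one_mul] at h3
    refine h3.congr' ?_ (by filter_upwards with t; ring_nf) 
    filter_upwards with t
    rw [mul_assoc, ← Real.exp_add]
    ring_nf

lemma uiGamma_split (s : ℝ) {c z : ℝ} (hc : 0 < c) (hz : c < z) :
    uiGamma s z = uiGamma s c - ∫ t in c..z, t ^ (s - 1) * Real.exp (-t) := by
  have hint := uiGamma_integrableOn s hc
  have h1 : Set.Ioi c = Set.Ioc c z ∪ Set.Ioi z := (Set.Ioc_union_Ioi_eq_Ioi hz.le).symm
  have h2 : uiGamma s c = (∫ t in Set.Ioc c z, t ^ (s-1) * Real.exp (-t)) + uiGamma s z := by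
    rw [uiGamma, h1, setIntegral_union]
    · rfl
    · exact Set.Ioc_disjoint_Ioi le_rfl
    · exact measurableSet_Ioi
    · exact hint.mono_set (by rw [h1]; exact Set.subset_union_left)
    · exact hint.mono_set (by rw [h1]; exact Set.subset_union_right)
  rw [intervalIntegral.integral_of_le hz.le]
  linarith [h2]

lemma hasDerivAt_uiGamma (s : ℝ) {y : ℝ} (hy : 0 < y) :
    HasDerivAt (uiGamma s) (-(y ^ (s - 1) * Real.exp (-y))) y := by
  set c := y / 2 with hc
  have hc0 : 0 < c := by positivity
  have hcy : c < y := by simp [hc]; linarith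
  have hint := uiGamma_integrableOn s hc0
  have hII : IntervalIntegrable (fun t : ℝ => t ^ (s-1) * Real.exp (-t)) volume c y := by
    rw [intervalIntegrable_iff_integrableOn_Ioc_of_le hcy.le]
    exact hint.mono_set Set.Ioc_subset_Ioi_self
  have hcont : ContinuousAt (fun t : ℝ => t ^ (s-1) * Real.exp (-t)) y := by
    apply ContinuousAt.mul
    · exact Real.continuousAt_rpow_const _ _ (Or.inl hy.ne')
    · exact (Real.continuous_exp.comp continuous_neg).continuousAt
  have hmeas : StronglyMeasurableAtFilter (fun t : ℝ => t ^ (s-1) * Real.exp (-t)) (nhds y) :=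
    ((measurable_id.pow_const _).mul (measurable_neg.exp)).stronglyMeasurable.stronglyMeasurableAtFilter
  have hD := intervalIntegral.integral_hasDerivAt_right hII hmeas hcont
  have hD2 : HasDerivAt (fun z => uiGamma s c - ∫ t in c..z, t ^ (s-1) * Real.exp (-t))
      (-(y ^ (s-1) * Real.exp (-y))) y := (hD.const_sub _)
  apply hD2.congr_of_eventuallyEq
  filter_upwards [eventually_gt_nhds hcy] with z hz
  exact uiGamma_split s hc0 hz

/-- **Derivative of `g` in Theorem 1.** For `α, β > 0`, the function
`g x = (α^(1/β) / (α * β)) * exp (α / x^β) * x^(1+β) * Γ(1 - 1/β; α / x^β)`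
is differentiable on `(0, 1)` with
`g' x = x - g x * (α * β / x^(β+1) - (β+1) / x)`. -/
theorem unitGompertz_g_hasDerivAt (α β : ℝ) (hα : 0 < α) (hβ : 0 < β)
    (g : ℝ → ℝ)
    (hg : g = fun x => α ^ (1 / β) / (α * β) * Real.exp (α / x ^ β) * x ^ (1 + β) *
      uiGamma (1 - 1 / β) (α / x ^ β)) :
    ∀ x ∈ Set.Ioo (0:ℝ) 1,
      HasDerivAt g (x - g x * (α * β / x ^ (β + 1) - (β + 1) / x)) x := by
  intro x hx
  obtain ⟨hx0, hx1⟩ := hx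
  have hxβ : (0:ℝ) < x ^ β := Real.rpow_pos_of_pos hx0 β
  have hu0 : 0 < α / x ^ β := div_pos hα hxβ
  -- derivative of u = α / x^β
  have hpow : HasDerivAt (fun x : ℝ => x ^ β) (β * x ^ (β - 1)) x :=
    Real.hasDerivAt_rpow_const (Or.inl hx0.ne')
  have hu : HasDerivAt (fun x : ℝ => α / x ^ β) (-(α * β / x ^ (β + 1))) x := by
    have : HasDerivAt (fun y : ℝ => α / y ^ β) ((0 * x ^ β - α * (β * x ^ (β - 1))) / (x ^ β) ^ 2) x :=
      (hasDerivAt_const x α).div hpow (by positivity : x ^ β ≠ 0)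
    convert this using 1
    have e1 : x ^ (β - 1) = x ^ β / x := by
      rw [eq_div_iff hx0.ne', ← Real.rpow_add_one hx0.ne']; ring_nf
    have e2 : x ^ (β + 1) = x ^ β * x := by
      rw [Real.rpow_add hx0, Real.rpow_one]
    rw [e1, e2]
    field_simp
    ring
  have hexp : HasDerivAt (fun x : ℝ => Real.exp (α / x ^ β))
      (Real.exp (α / x ^ β) * (-(α * β / x ^ (β + 1)))) x := by
    simpa [mul_comm] using hu.exp
  have hΓ : HasDerivAt (fun x : ℝ => uiGamma (1 - 1/β) (α / x ^ β))
      (-((α / x ^ β) ^ (1 - 1/β - 1) * Real.exp (-(α / x ^ β))) * (-(α * β / x ^ (β + 1)))) x :=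
    by have := (hasDerivAt_uiGamma (1 - 1/β) hu0).comp x hu; exact this
  have hxp : HasDerivAt (fun x : ℝ => x ^ (1 + β)) ((1 + β) * x ^ (1 + β - 1)) x :=
    Real.hasDerivAt_rpow_const (Or.inl hx0.ne')
  set C := α ^ (1/β) / (α * β) with hC
  have hD : HasDerivAt g
      ((C * (Real.exp (α / x ^ β) * (-(α * β / x ^ (β + 1)))) * x ^ (1 + β)
        + C * Real.exp (α / x ^ β) * ((1 + β) * x ^ (1 + β - 1)))
        * uiGamma (1 - 1/β) (α / x ^ β)
       + C * Real.exp (α / x ^ β) * x ^ (1 + β)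
         * (-((α / x ^ β) ^ (1 - 1/β - 1) * Real.exp (-(α / x ^ β))) * (-(α * β / x ^ (β + 1))))) x := by
    rw [hg]
    exact (((hexp.const_mul C).mul hxp).mul hΓ)
  convert hD using 1
  have hgx : g x = C * Real.exp (α / x ^ β) * x ^ (1 + β) * uiGamma (1 - 1/β) (α / x ^ β) := by
    rw [hg]
  -- key rpow identity: (α / x^β)^(-1/β) = α^(-1/β) * x
  have hkey : (α / x ^ β) ^ (1 - 1/β - 1) = α ^ (-(1/β)) * x := by
    have : (1 : ℝ) - 1/β - 1 = -(1/β) := by ring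
    rw [this, Real.div_rpow hα.le hxβ.le, Real.rpow_neg hα.le, Real.rpow_neg hxβ.le,
      ← Real.rpow_mul hx0.le]
    field_simp
    simp
  have hterm : C * Real.exp (α / x ^ β) * x ^ (1 + β)
      * (-((α / x ^ β) ^ (1 - 1/β - 1) * Real.exp (-(α / x ^ β))) * (-(α * β / x ^ (β + 1)))) = x := by
    rw [hkey]
    have hE : Real.exp (α / x ^ β) * Real.exp (-(α / x ^ β)) = 1 := by
      rw [← Real.exp_add]; simp
    have hxx : x ^ (1 + β) * (α * β / x ^ (β + 1)) = α * β := by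
      rw [add_comm (1:ℝ) β] at *
      field_simp
    have hCα : C * (α ^ (-(1/β)) * x) * (α * β) = x := by
      rw [hC, Real.rpow_neg hα.le]
      have hαr : (0:ℝ) < α ^ (1/β) := Real.rpow_pos_of_pos hα _
      field_simp
    calc C * Real.exp (α / x ^ β) * x ^ (1 + β)
          * (-(α ^ (-(1/β)) * x * Real.exp (-(α / x ^ β))) * (-(α * β / x ^ (β + 1))))
        = (C * (α ^ (-(1/β)) * x)) * (Real.exp (α / x ^ β) * Real.exp (-(α / x ^ β)))
          * (x ^ (1 + β) * (α * β / x ^ (β + 1))) := by ring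
      _ = x := by rw [hE, hxx, mul_one]; exact hCα
  have hterm2 : (C * (Real.exp (α / x ^ β) * (-(α * β / x ^ (β + 1)))) * x ^ (1 + β)
        + C * Real.exp (α / x ^ β) * ((1 + β) * x ^ (1 + β - 1)))
        * uiGamma (1 - 1/β) (α / x ^ β)
      = - g x * (α * β / x ^ (β + 1) - (β + 1) / x) := by
    rw [hgx]
    have hx1β : x ^ (1 + β - 1) = x ^ (1 + β) / x := by
      rw [eq_div_iff hx0.ne', ← Real.rpow_add_one hx0.ne']
      ring_nf
    rw [hx1β]
    field_simp
    ring
  rw [hterm2, hterm]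
  ring
end

section
/- Let α > 0 and β > 0, and define g(x) = (α^{1/β}/(αβ))·exp(α/x^β)·x^{1+β}·Γ(1 − 1/β; α/x^β) for x ∈ (0,1), where Γ(s; y) = ∫_y^∞ t^{s−1} e^{−t} dt. Suppose f is a positive, differentiable function on (0,1) with ∫_0^1 f(t) dt = 1 (with t·f(t) integrable near 0) such that for every x ∈ (0,1), ∫_0^x t·f(t) dt = g(x)·f(x). Then f(x) = αβ·exp(−α(x^{−β} − 1))/x^{1+β} for every x ∈ (0,1), i.e., f is the unit-Gompertz density with parameters α and β. -/
open MeasureTheory Set Filter Real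

lemma uiG_contOn (s : ℝ) :
    ContinuousOn (fun t : ℝ => t ^ (s - 1) * Real.exp (-t)) (Set.Ioi 0) := by
  intro t ht
  exact ((Real.continuousAt_rpow_const t _ (Or.inl (ne_of_gt ht))).mul
    (Real.continuous_exp.comp continuous_neg).continuousAt).continuousWithinAt

lemma uiG_int {s y : ℝ} (hy : 0 < y) :
    IntegrableOn (fun t : ℝ => t ^ (s - 1) * Real.exp (-t)) (Set.Ioi y) := by
  apply integrable_of_isBigO_exp_neg (one_half_pos)
  · exact (uiG_contOn s).mono (fun t ht => lt_of_lt_of_le hy ht)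
  · have h := tendsto_rpow_mul_exp_neg_mul_atTop_nhds_zero (s - 1) (1/2) one_half_pos
    have h2 : Tendsto (fun t : ℝ => (t ^ (s - 1) * Real.exp (-t)) / Real.exp (-(1/2) * t))
        atTop (nhds 0) := by
      refine h.congr' ?_
      filter_upwards [eventually_ge_atTop (0:ℝ)] with t _
      rw [mul_div_assoc, ← Real.exp_sub]
      ring_nf
    refine Asymptotics.IsLittleO.isBigO ?_
    rw [Asymptotics.isLittleO_iff_tendsto (fun t ht => absurd ht (Real.exp_ne_zero _))]
    exact h2

lemma uiGamma_eq {s y : ℝ} (hy : 0 < y) :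
    uiGamma s y = uiGamma s 1 - ∫ t in (1:ℝ)..y, t ^ (s - 1) * Real.exp (-t) := by
  have key : ∀ a b : ℝ, 0 < a → a ≤ b →
      uiGamma s a = (∫ t in a..b, t ^ (s - 1) * Real.exp (-t)) + uiGamma s b := by
    intro a b ha hab
    rw [intervalIntegral.integral_of_le hab, uiGamma, uiGamma,
      ← MeasureTheory.setIntegral_union (Set.Ioc_disjoint_Ioi le_rfl) measurableSet_Ioi
        ((uiG_int ha).mono_set Set.Ioc_subset_Ioi_self)
        (uiG_int (lt_of_lt_of_le ha hab)),
      Set.Ioc_union_Ioi_eq_Ioi hab]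
  rcases le_or_gt y 1 with h | h
  · have := key y 1 hy h
    rw [this, intervalIntegral.integral_symm]
    ring
  · have := key 1 y one_pos h.le
    rw [this]
    ring

lemma uiGamma_hasDeriv {s y : ℝ} (hy : 0 < y) :
    HasDerivAt (uiGamma s) (-(y ^ (s - 1) * Real.exp (-y))) y := by
  have h1 : HasDerivAt (fun u : ℝ => ∫ t in (1:ℝ)..u, t ^ (s - 1) * Real.exp (-t))
      (y ^ (s - 1) * Real.exp (-y)) y := by
    refine intervalIntegral.integral_hasDerivAt_right ?_ ?_ ?_
    · apply ContinuousOn.intervalIntegrable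
      apply (uiG_contOn s).mono
      intro t ht
      have : min 1 y ≤ t := by
        rcases Set.mem_uIcc.1 ht with h' | h'
        · exact (min_le_left 1 y).trans h'.1
        · exact (min_le_right 1 y).trans h'.1
      exact lt_of_lt_of_le (lt_min one_pos hy) this
    · exact (uiG_contOn s).stronglyMeasurableAtFilter isOpen_Ioi y hy
    · exact ((Real.continuousAt_rpow_const y _ (Or.inl hy.ne')).mul
        (Real.continuous_exp.comp continuous_neg).continuousAt)
  have h2 : HasDerivAt (fun u : ℝ => uiGamma s 1 - ∫ t in (1:ℝ)..u, t ^ (s - 1) * Real.exp (-t))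
      (-(y ^ (s - 1) * Real.exp (-y))) y := (h1.const_sub _)
  refine h2.congr_of_eventuallyEq ?_
  filter_upwards [Ioi_mem_nhds hy] with u hu
  exact uiGamma_eq hu

lemma uiGamma_pos {s y : ℝ} (hy : 0 < y) : 0 < uiGamma s y := by
  rw [uiGamma]
  have hnn : 0 ≤ᵐ[volume.restrict (Set.Ioi y)] fun t : ℝ => t ^ (s - 1) * Real.exp (-t) := by
    filter_upwards [ae_restrict_mem measurableSet_Ioi] with t ht
    have : (0:ℝ) < t := lt_trans hy ht
    positivity
  rw [MeasureTheory.setIntegral_pos_iff_support_of_nonneg_ae hnn (uiG_int hy)]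
  have hsub : Set.Ioi y ⊆ Function.support (fun t : ℝ => t ^ (s - 1) * Real.exp (-t)) ∩ Set.Ioi y := by
    intro t ht
    have htpos : (0:ℝ) < t := lt_trans hy ht
    refine ⟨?_, ht⟩
    simp only [Function.mem_support]
    positivity
  calc (0:ENNReal) < volume (Set.Ioi y) := by simp [Real.volume_Ioi]
    _ ≤ _ := measure_mono hsub

section
variable {α β : ℝ}

lemma F0_hasDeriv (hα : 0 < α) (hβ : 0 < β) {x : ℝ} (hx : 0 < x) :
    HasDerivAt (fun u : ℝ => Real.exp (-α * (u ^ (-β) - 1)))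
      (α * β * Real.exp (-α * (x ^ (-β) - 1)) / x ^ (1 + β)) x := by
  have h1 : HasDerivAt (fun u : ℝ => u ^ (-β)) (-β * x ^ (-β - 1)) x :=
    Real.hasDerivAt_rpow_const (Or.inl hx.ne')
  have h2 := ((h1.sub_const 1).const_mul (-α)).exp
  convert h2 using 1
  have hx1 : x ^ (1 + β) ≠ 0 := (Real.rpow_pos_of_pos hx _).ne'
  have hne : x ^ (-β - 1) = (x ^ (1 + β))⁻¹ := by
    rw [show -β - 1 = -(1 + β) by ring, Real.rpow_neg hx.le]
  rw [hne]
  field_simp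

lemma f0_diff (hα : 0 < α) (hβ : 0 < β) {x : ℝ} (hx : 0 < x) :
    DifferentiableAt ℝ (fun u : ℝ => α * β * Real.exp (-α * (u ^ (-β) - 1)) / u ^ (1 + β)) x := by
  have h1 : HasDerivAt (fun u : ℝ => u ^ (-β)) (-β * x ^ (-β - 1)) x :=
    Real.hasDerivAt_rpow_const (Or.inl hx.ne')
  have h2 := (((h1.sub_const 1).const_mul (-α)).exp.const_mul (α * β)).differentiableAt
  have h3 : HasDerivAt (fun u : ℝ => u ^ (1 + β)) ((1 + β) * x ^ (1 + β - 1)) x :=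
    Real.hasDerivAt_rpow_const (Or.inl hx.ne')
  exact h2.div h3.differentiableAt (Real.rpow_pos_of_pos hx _).ne'

lemma phi_hasDeriv (hα : 0 < α) (hβ : 0 < β) {x : ℝ} (hx : 0 < x) :
    HasDerivAt (fun u : ℝ => α ^ (1/β) * Real.exp α * uiGamma (1 - 1/β) (α * u ^ (-β)))
      (x * (α * β * Real.exp (-α * (x ^ (-β) - 1)) / x ^ (1 + β))) x := by
  have hb : β ≠ 0 := hβ.ne'
  have hy : 0 < α * x ^ (-β) := mul_pos hα (Real.rpow_pos_of_pos hx _)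
  have h1 : HasDerivAt (fun u : ℝ => α * u ^ (-β)) (α * (-β * x ^ (-β - 1))) x :=
    (Real.hasDerivAt_rpow_const (Or.inl hx.ne')).const_mul α
  have h2 : HasDerivAt (fun u : ℝ => uiGamma (1 - 1/β) (α * u ^ (-β)))
      (-((α * x ^ (-β)) ^ ((1 - 1/β) - 1) * Real.exp (-(α * x ^ (-β)))) *
        (α * (-β * x ^ (-β - 1)))) x := by
    have := (uiGamma_hasDeriv (s := 1 - 1/β) hy).comp x h1; exact this
  have h3 := h2.const_mul (α ^ (1/β) * Real.exp α)
  refine h3.congr_deriv ?_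
  have e1 : (α * x ^ (-β)) ^ ((1 - 1/β) - 1) = (α ^ (1/β))⁻¹ * x := by
    rw [Real.mul_rpow hα.le (Real.rpow_pos_of_pos hx (-β)).le, ← Real.rpow_mul hx.le,
      show -β * ((1 - 1/β) - 1) = 1 by field_simp; ring, Real.rpow_one,
      show (1 : ℝ) - 1/β - 1 = -(1/β) by ring, Real.rpow_neg hα.le]
  have hne : x ^ (-β - 1) = (x ^ (1 + β))⁻¹ := by
    rw [show -β - 1 = -(1 + β) by ring, Real.rpow_neg hx.le]
  have eexp : Real.exp (-α * (x ^ (-β) - 1)) = Real.exp α * Real.exp (-(α * x ^ (-β))) := by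
    rw [← Real.exp_add]; congr 1; ring
  have hx1 : x ^ (1 + β) ≠ 0 := (Real.rpow_pos_of_pos hx _).ne'
  have ha1 : α ^ (1/β) ≠ 0 := (Real.rpow_pos_of_pos hα _).ne'
  rw [e1, hne, eexp]
  field_simp

lemma f0_integral (hα : 0 < α) (hβ : 0 < β) :
    ∫ t in Set.Ioo (0:ℝ) 1, (α * β * Real.exp (-α * (t ^ (-β) - 1)) / t ^ (1 + β)) = 1 := by
  set f₀ : ℝ → ℝ := fun u => α * β * Real.exp (-α * (u ^ (-β) - 1)) / u ^ (1 + β) with hf₀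
  set H : ℝ → ℝ := fun u => if u ≤ 0 then 0 else Real.exp (-α * (u ^ (-β) - 1)) with hH
  have hHeq : ∀ u : ℝ, 0 < u → H u = Real.exp (-α * (u ^ (-β) - 1)) := by
    intro u hu; simp [hH, not_le.2 hu]
  have hHd : ∀ x ∈ Set.Ioo (0:ℝ) 1, HasDerivAt H (f₀ x) x := by
    intro x hx
    refine (F0_hasDeriv hα hβ hx.1).congr_of_eventuallyEq ?_
    filter_upwards [Ioi_mem_nhds hx.1] with u hu
    exact hHeq u hu
  have hHc : ContinuousOn H (Set.Icc 0 1) := by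
    intro x hx
    rcases eq_or_lt_of_le hx.1 with h0 | h0
    · subst h0
      have hH0 : H 0 = 0 := by simp [hH]
      rw [ContinuousWithinAt, hH0]
      have hmono : nhdsWithin (0:ℝ) (Set.Icc 0 1) ≤ nhdsWithin 0 (insert 0 (Set.Ioi 0)) := by
        apply nhdsWithin_mono
        intro u hu
        rcases eq_or_lt_of_le hu.1 with h | h
        · exact Or.inl h.symm
        · exact Or.inr h
      refine Tendsto.mono_left ?_ hmono
      rw [nhdsWithin_insert]
      rw [Filter.tendsto_sup]
      constructor
      · simpa [hH0] using tendsto_pure_nhds H 0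
      · have hinner : Tendsto (fun u : ℝ => u ^ (-β)) (nhdsWithin 0 (Set.Ioi 0)) atTop := by
          have h1 : Tendsto (fun u : ℝ => (u⁻¹) ^ β) (nhdsWithin 0 (Set.Ioi 0)) atTop :=
            (tendsto_rpow_atTop hβ).comp tendsto_inv_nhdsGT_zero
          refine h1.congr' ?_
          filter_upwards [self_mem_nhdsWithin] with u hu
          rw [← Real.rpow_neg_one, ← Real.rpow_mul (le_of_lt hu)]
          congr 1; ring
        have h2 : Tendsto (fun u : ℝ => -α * (u ^ (-β) - 1)) (nhdsWithin 0 (Set.Ioi 0)) atBot := by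
          have hs := tendsto_atTop_add_const_right (nhdsWithin (0:ℝ) (Set.Ioi 0)) (-1 : ℝ) hinner
          have := hs.const_mul_atTop_of_neg (show -α < 0 by linarith)
          simpa [sub_eq_add_neg] using this
        have h3 := Real.tendsto_exp_atBot.comp h2
        refine h3.congr' ?_
        filter_upwards [self_mem_nhdsWithin] with u hu
        exact (hHeq u hu).symm
    · apply ContinuousAt.continuousWithinAt
      have hc : ContinuousAt (fun u : ℝ => Real.exp (-α * (u ^ (-β) - 1))) x :=
        (F0_hasDeriv hα hβ h0).differentiableAt.continuousAt
      apply hc.congr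
      filter_upwards [Ioi_mem_nhds h0] with u hu
      exact (hHeq u hu).symm
  have hnn : ∀ x ∈ Set.Ioo (0:ℝ) 1, 0 ≤ f₀ x := by
    intro x hx
    have h1 : (0:ℝ) < x := hx.1
    have h2 := Real.exp_pos (-α * (x ^ (-β) - 1))
    have h3 := Real.rpow_pos_of_pos hx.1 (1 + β)
    simp only [hf₀]
    positivity
  have hio : IntegrableOn f₀ (Set.Ioc 0 1) :=
    intervalIntegral.integrableOn_deriv_of_nonneg hHc hHd hnn
  have hii : IntervalIntegrable f₀ volume 0 1 :=
    (intervalIntegrable_iff_integrableOn_Ioc_of_le zero_le_one).2 hio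
  have key : ∫ t in (0:ℝ)..1, f₀ t = H 1 - H 0 :=
    intervalIntegral.integral_eq_sub_of_hasDeriv_right_of_le zero_le_one hHc
      (fun x hx => (hHd x hx).hasDerivWithinAt) hii
  have hH1 : H 1 = 1 := by simp [hH]
  have hH0 : H 0 = 0 := by simp [hH]
  rw [MeasureTheory.setIntegral_congr_set Ioo_ae_eq_Ioc,
    ← intervalIntegral.integral_of_le zero_le_one, key, hH1, hH0, sub_zero]

end

/-- **Theorem 1, converse part.** Let `α, β > 0` and
`g x = (α^(1/β) / (α * β)) * exp (α / x^β) * x^(1+β) * Γ(1 - 1/β; α / x^β)`.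
If `f` is a positive differentiable function on `(0, 1)` integrating to `1`
(with `t * f t` integrable near `0`) such that
`∫ t in 0..x, t * f t = g x * f x` for every `x ∈ (0, 1)`, then `f` is the
unit-Gompertz density: `f x = α * β * exp (-α * (x^(-β) - 1)) / x^(1+β)` on `(0, 1)`. -/
theorem unitGompertz_characterization_left (α β : ℝ) (hα : 0 < α) (hβ : 0 < β)
    (g f : ℝ → ℝ)
    (hg : g = fun x => α ^ (1 / β) / (α * β) * Real.exp (α / x ^ β) * x ^ (1 + β) *
      uiGamma (1 - 1 / β) (α / x ^ β))
    (hf_pos : ∀ x ∈ Set.Ioo (0:ℝ) 1, 0 < f x)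
    (hf_diff : ∀ x ∈ Set.Ioo (0:ℝ) 1, DifferentiableAt ℝ f x)
    (hf_int : (∫ t in (0:ℝ)..1, f t) = 1)
    (hint : ∀ x ∈ Set.Ioo (0:ℝ) 1,
      IntervalIntegrable (fun t => t * f t) MeasureTheory.volume 0 x)
    (hid : ∀ x ∈ Set.Ioo (0:ℝ) 1, (∫ t in (0:ℝ)..x, t * f t) = g x * f x) :
    ∀ x ∈ Set.Ioo (0:ℝ) 1,
      f x = α * β * Real.exp (-α * (x ^ (-β) - 1)) / x ^ (1 + β) := by
  have hb : β ≠ 0 := hβ.ne'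
  set f₀ : ℝ → ℝ := fun u => α * β * Real.exp (-α * (u ^ (-β) - 1)) / u ^ (1 + β) with hf₀def
  set φ : ℝ → ℝ := fun u => α ^ (1/β) * Real.exp α * uiGamma (1 - 1/β) (α * u ^ (-β)) with hφdef
  have hf₀pos : ∀ u : ℝ, 0 < u → 0 < f₀ u := by
    intro u hu
    have h2 := Real.exp_pos (-α * (u ^ (-β) - 1))
    have h3 := Real.rpow_pos_of_pos hu (1 + β)
    simp only [hf₀def]
    positivity
  -- φ = g * f₀ on positive reals
  have hgf₀ : ∀ u : ℝ, 0 < u → g u * f₀ u = φ u := by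
    intro u hu
    have harg : α / u ^ β = α * u ^ (-β) := by
      rw [Real.rpow_neg hu.le, div_eq_mul_inv]
    have eexp : Real.exp (-α * (u ^ (-β) - 1)) = Real.exp α * Real.exp (-(α * u ^ (-β))) := by
      rw [← Real.exp_add]; congr 1; ring
    have hexpinv : Real.exp (-(α * u ^ (-β))) = (Real.exp (α * u ^ (-β)))⁻¹ := by
      rw [Real.exp_neg]
    have hu1 : u ^ (1 + β) ≠ 0 := (Real.rpow_pos_of_pos hu _).ne'
    have hab : α * β ≠ 0 := (mul_pos hα hβ).ne'
    have hene : Real.exp (α * u ^ (-β)) ≠ 0 := Real.exp_ne_zero _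
    rw [hg]
    simp only [hf₀def, hφdef, harg, eexp, hexpinv]
    field_simp
  -- key pointwise derivative identity
  have key : ∀ u ∈ Set.Ioo (0:ℝ) 1, f u * deriv f₀ u = f₀ u * deriv f u := by
    intro u hu
    obtain ⟨hu0, hu1⟩ := hu
    have hf₀diff : DifferentiableAt ℝ f₀ u := f0_diff hα hβ hu0
    have hG : HasDerivAt (fun v => ∫ t in (0:ℝ)..v, t * f t) (u * f u) u := by
      have hcont : ContinuousOn (fun t : ℝ => t * f t) (Set.Ioo 0 1) := fun t ht =>
        (continuousAt_id.mul (hf_diff t ht).continuousAt).continuousWithinAt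
      exact intervalIntegral.integral_hasDerivAt_right (hint u ⟨hu0, hu1⟩)
        (hcont.stronglyMeasurableAtFilter isOpen_Ioo u ⟨hu0, hu1⟩)
        (continuousAt_id.mul (hf_diff u ⟨hu0, hu1⟩).continuousAt)
    have hφd : HasDerivAt φ (u * f₀ u) u := phi_hasDeriv hα hβ hu0
    have hΨd : HasDerivAt
        (fun v => (∫ t in (0:ℝ)..v, t * f t) * f₀ v - φ v * f v)
        ((u * f u) * f₀ u + (∫ t in (0:ℝ)..u, t * f t) * deriv f₀ u
          - ((u * f₀ u) * f u + φ u * deriv f u)) u :=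
      (hG.mul hf₀diff.hasDerivAt).sub (hφd.mul (hf_diff u ⟨hu0, hu1⟩).hasDerivAt)
    have hzero : HasDerivAt
        (fun v => (∫ t in (0:ℝ)..v, t * f t) * f₀ v - φ v * f v) 0 u := by
      refine (hasDerivAt_const u (0:ℝ)).congr_of_eventuallyEq ?_
      filter_upwards [isOpen_Ioo.mem_nhds (show u ∈ Set.Ioo (0:ℝ) 1 from ⟨hu0, hu1⟩)] with v hv
      rw [hid v hv, ← hgf₀ v hv.1]
      ring
    have huniq := hΨd.unique hzero
    rw [hid u ⟨hu0, hu1⟩, ← hgf₀ u hu0] at huniq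
    have hBD : (g u * f u) * deriv f₀ u = (g u * f₀ u) * deriv f u := by nlinarith [huniq]
    have hy : 0 < α * u ^ (-β) := mul_pos hα (Real.rpow_pos_of_pos hu0 _)
    have hφpos : 0 < φ u := by
      simp only [hφdef]
      exact mul_pos (mul_pos (Real.rpow_pos_of_pos hα _) (Real.exp_pos _)) (uiGamma_pos hy)
    have hgne : g u ≠ 0 := by
      intro h
      have := hgf₀ u hu0
      rw [h, zero_mul] at this
      exact hφpos.ne this
    refine mul_left_cancel₀ hgne ?_
    rw [← mul_assoc, ← mul_assoc]
    exact hBD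
  -- the ratio f / f₀ is constant on (0,1)
  have hrd : ∀ u ∈ Set.Ioo (0:ℝ) 1, HasDerivAt (fun v => f v / f₀ v) 0 u := by
    intro u hu
    have h := ((hf_diff u hu).hasDerivAt).div (f0_diff hα hβ hu.1).hasDerivAt
      (hf₀pos u hu.1).ne'
    have h0 : deriv f u * f₀ u - f u * deriv f₀ u = 0 := by
      have := key u hu; linarith
    rw [h0, zero_div] at h
    exact h
  have hdiffOn : DifferentiableOn ℝ (fun v => f v / f₀ v) (Set.Ioo 0 1) :=
    fun u hu => ((hrd u hu).differentiableAt).differentiableWithinAt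
  have hfder : ∀ u ∈ Set.Ioo (0:ℝ) 1, fderivWithin ℝ (fun v => f v / f₀ v) (Set.Ioo 0 1) u = 0 := by
    intro u hu
    rw [fderivWithin_of_isOpen isOpen_Ioo hu, (hrd u hu).hasFDerivAt.fderiv]
    ext v
    simp
  have hmem : (1/2 : ℝ) ∈ Set.Ioo (0:ℝ) 1 := by norm_num
  have hconst : ∀ u ∈ Set.Ioo (0:ℝ) 1, f u / f₀ u = f (1/2) / f₀ (1/2) := by
    intro u hu
    exact (convex_Ioo (0:ℝ) 1).is_const_of_fderivWithin_eq_zero hdiffOn hfder hu hmem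
  set c : ℝ := f (1/2) / f₀ (1/2) with hcdef
  have hfc : ∀ u ∈ Set.Ioo (0:ℝ) 1, f u = c * f₀ u := by
    intro u hu
    have h := hconst u hu
    rw [div_eq_iff (hf₀pos u hu.1).ne'] at h
    exact h
  have hintf0 : ∫ t in Set.Ioo (0:ℝ) 1, f₀ t = 1 := f0_integral hα hβ
  have hc1 : c = 1 := by
    have h1 : ∫ t in Set.Ioo (0:ℝ) 1, f t = c := by
      rw [MeasureTheory.setIntegral_congr_fun measurableSet_Ioo hfc]
      rw [MeasureTheory.integral_const_mul, hintf0, mul_one]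
    have h2 : ∫ t in Set.Ioo (0:ℝ) 1, f t = 1 := by
      rw [MeasureTheory.setIntegral_congr_set Ioo_ae_eq_Ioc,
        ← intervalIntegral.integral_of_le zero_le_one, hf_int]
    rw [h1] at h2
    exact h2
  intro x hx
  have := hfc x hx
  rw [hc1, one_mul] at this
  exact this
end

section
/- Let α > 0 and β > 0, and define h(x) = (α^{1/β}/(αβ))·exp(α/x^β)·x^{1+β}·[Γ(1 − 1/β; α) − Γ(1 − 1/β; α/x^β)] for x ∈ (0,1), where Γ(s; y) = ∫_y^∞ t^{s−1} e^{−t} dt. Then h is differentiable on (0,1) and for every x ∈ (0,1), h'(x) = −x − h(x)·(αβ/x^{β+1} − (β+1)/x). -/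
open Real MeasureTheory Set Filter

lemma uiGamma_aux_integrableOn (s : ℝ) {a : ℝ} (ha : 0 < a) :
    IntegrableOn (fun t : ℝ => t ^ (s - 1) * Real.exp (-t)) (Set.Ioi a) := by
  refine integrable_of_isBigO_exp_neg (b := 1/2) one_half_pos ?_ ?_
  · exact (continuousOn_id.rpow_const fun x hx => Or.inl (ha.trans_le hx).ne').mul
      continuousOn_id.neg.rexp
  · have h1 : (fun t : ℝ => t ^ (s - 1) * Real.exp (-t))
        = fun t : ℝ => Real.exp (-t) * t ^ (s - 1) := by
      funext t; ring
    rw [h1]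
    exact (Real.Gamma_integrand_isLittleO (s - 1)).isBigO

lemma uiGamma_aux_sub (s : ℝ) {a b : ℝ} (ha : 0 < a) (hab : a ≤ b) :
    uiGamma s a - uiGamma s b = ∫ t in a..b, t ^ (s - 1) * Real.exp (-t) := by
  have hint := uiGamma_aux_integrableOn s ha
  have h1 : Set.Ioc a b ∪ Set.Ioi b = Set.Ioi a := Set.Ioc_union_Ioi_eq_Ioi hab
  rw [intervalIntegral.integral_of_le hab]
  unfold uiGamma
  rw [← h1, setIntegral_union (Set.Ioc_disjoint_Ioi le_rfl) measurableSet_Ioi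
      (hint.mono_set (by rw [← h1]; exact subset_union_left))
      (hint.mono_set (by rw [← h1]; exact subset_union_right))]
  ring

/-- **Derivative of `h` in Theorem 2.** For `α, β > 0`, the function
`h x = (α^(1/β) / (α * β)) * exp (α / x^β) * x^(1+β) *
  (Γ(1 - 1/β; α) - Γ(1 - 1/β; α / x^β))`
is differentiable on `(0, 1)` with
`h' x = -x - h x * (α * β / x^(β+1) - (β+1) / x)`. -/
theorem unitGompertz_h_hasDerivAt (α β : ℝ) (hα : 0 < α) (hβ : 0 < β)
    (h : ℝ → ℝ)
    (hh : h = fun x => α ^ (1 / β) / (α * β) * Real.exp (α / x ^ β) * x ^ (1 + β) *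
      (uiGamma (1 - 1 / β) α - uiGamma (1 - 1 / β) (α / x ^ β))) :
    ∀ x ∈ Set.Ioo (0:ℝ) 1,
      HasDerivAt h (-x - h x * (α * β / x ^ (β + 1) - (β + 1) / x)) x := by
  intro x hx
  obtain ⟨hx0, hx1⟩ := hx
  set s : ℝ := 1 - 1 / β with hs
  set f : ℝ → ℝ := fun t => t ^ (s - 1) * Real.exp (-t) with hf
  set C : ℝ := α ^ (1 / β) / (α * β) with hC
  set F : ℝ → ℝ := fun u => ∫ t in α..u, f t with hFdef
  set g : ℝ → ℝ := fun y => α / y ^ β with hg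
  have hp : (0:ℝ) < x ^ β := Real.rpow_pos_of_pos hx0 β
  have hu0 : 0 < g x := div_pos hα hp
  have hge : ∀ y ∈ Set.Ioo (0:ℝ) 1, α ≤ g y := by
    intro y hy
    have hpy : (0:ℝ) < y ^ β := Real.rpow_pos_of_pos hy.1 β
    have hle1 : y ^ β ≤ 1 := Real.rpow_le_one hy.1.le hy.2.le hβ.le
    rw [hg, le_div_iff₀ hpy]
    nlinarith
  have hev : h =ᶠ[nhds x] fun y => C * Real.exp (g y) * y ^ (1 + β) * F (g y) := by
    filter_upwards [isOpen_Ioo.mem_nhds ⟨hx0, hx1⟩] with y hy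
    rw [hh]
    simp only
    rw [uiGamma_aux_sub s hα (hge y hy)]
  have hxb : HasDerivAt (fun y : ℝ => y ^ β) (β * x ^ (β - 1)) x :=
    Real.hasDerivAt_rpow_const (Or.inl hx0.ne')
  have hg' : HasDerivAt g ((0 * x ^ β - α * (β * x ^ (β - 1))) / (x ^ β) ^ 2) x :=
    (hasDerivAt_const x α).div hxb hp.ne'
  have hexp : HasDerivAt (fun y => Real.exp (g y))
      (Real.exp (g x) * ((0 * x ^ β - α * (β * x ^ (β - 1))) / (x ^ β) ^ 2)) x := hg'.exp
  have hpow : HasDerivAt (fun y : ℝ => y ^ (1 + β)) ((1 + β) * x ^ (1 + β - 1)) x :=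
    Real.hasDerivAt_rpow_const (Or.inl hx0.ne')
  have hcontf : ContinuousOn f (Set.Ioi (0:ℝ)) :=
    (continuousOn_id.rpow_const fun t ht => Or.inl (ne_of_gt ht)).mul
      continuousOn_id.neg.rexp
  have hInt : IntervalIntegrable f volume α (g x) :=
    (intervalIntegrable_iff_integrableOn_Ioc_of_le (hge x ⟨hx0, hx1⟩)).mpr
      ((uiGamma_aux_integrableOn s hα).mono_set Set.Ioc_subset_Ioi_self)
  have hF : HasDerivAt F (f (g x)) (g x) :=
    intervalIntegral.integral_hasDerivAt_right hInt
      (hcontf.stronglyMeasurableAtFilter isOpen_Ioi _ hu0)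
      (hcontf.continuousAt (isOpen_Ioi.mem_nhds hu0))
  have hFg : HasDerivAt (fun y => F (g y))
      (f (g x) * ((0 * x ^ β - α * (β * x ^ (β - 1))) / (x ^ β) ^ 2)) x := hF.comp x hg'
  have hprod := (((hexp.const_mul C).mul hpow).mul hFg)
  refine HasDerivAt.congr_of_eventuallyEq ?_ hev
  convert hprod using 1
  case e'_4 => rfl
  case e'_8 => rfl
  have hxval : h x = C * Real.exp (g x) * x ^ (1 + β) * F (g x) := hev.self_of_nhds
  rw [hxval]
  simp only [Pi.mul_apply]
  have hb1 : (x ^ β) ^ (-(1/β)) = x⁻¹ := by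
    rw [← Real.rpow_mul hx0.le, show β * -(1/β) = -1 by field_simp, Real.rpow_neg_one]
  have e5 : f (g x) = (α ^ (1/β))⁻¹ * x * (Real.exp (g x))⁻¹ := by
    simp only [hf, hg]
    rw [show s - 1 = -(1/β) by rw [hs]; ring]
    rw [Real.div_rpow hα.le hp.le, hb1, Real.rpow_neg hα.le, Real.exp_neg]
    field_simp
  have e1 : x ^ (1 + β) = x * x ^ β := by
    rw [Real.rpow_add hx0, Real.rpow_one]
  have e2 : x ^ (β + 1) = x ^ β * x := by
    rw [Real.rpow_add hx0, Real.rpow_one]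
  have e3 : x ^ (1 + β - 1) = x ^ β := by
    rw [show (1 + β - 1 : ℝ) = β by ring]
  have e4 : x ^ (β - 1) = x ^ β / x := by
    rw [Real.rpow_sub hx0, Real.rpow_one]
  rw [e5, e1, e2, e3, e4, hC]
  have hE : Real.exp (g x) ≠ 0 := (Real.exp_pos _).ne'
  have hA : (α:ℝ) ^ (1/β) ≠ 0 := (Real.rpow_pos_of_pos hα _).ne'
  field_simp
  ring
end

section
/- Let α > 0, β > 0, and let r be a nonnegative integer. Let f(x) = αβ·exp(−α(x^{−β} − 1))/x^{1+β} and F(x) = exp(−α(x^{−β} − 1)) for x ∈ (0,1). Then the r-th probability weighted moment satisfies β_r := ∫_0^1 x·[F(x)]^r·f(x) dx = α^{1/β}·(r+1)^{1/β − 1}·e^{(r+1)α}·Γ(1 − 1/β; (r+1)α), where Γ(s; y) = ∫_y^∞ t^{s−1} e^{−t} dt is the upper incomplete gamma function. -/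
/-- **Probability weighted moments of the unit-Gompertz distribution.**
For `α, β > 0` and `r : ℕ`, with density
`f x = α * β * exp (-α * (x ^ (-β) - 1)) / x ^ (1 + β)` and cdf
`F x = exp (-α * (x ^ (-β) - 1))`, the `r`-th probability weighted moment is
`β_r = ∫_0^1 x * (F x)^r * f x dx
     = α^(1/β) * (r+1)^(1/β - 1) * e^((r+1)α) * Γ(1 - 1/β; (r+1)α)`. -/
theorem unitGompertz_pwm (α β : ℝ) (hα : 0 < α) (hβ : 0 < β) (r : ℕ)
    (f F : ℝ → ℝ)
    (hf : f = fun x => α * β * Real.exp (-α * (x ^ (-β) - 1)) / x ^ (1 + β))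
    (hF : F = fun x => Real.exp (-α * (x ^ (-β) - 1))) :
    (∫ x in (0:ℝ)..1, x * (F x) ^ r * f x) =
      α ^ (1 / β) * ((r : ℝ) + 1) ^ (1 / β - 1) * Real.exp (((r : ℝ) + 1) * α) *
        uiGamma (1 - 1 / β) (((r : ℝ) + 1) * α) := by
  subst hf hF
  set c : ℝ := ((r : ℝ) + 1) * α with hc
  have hr1 : (0:ℝ) < (r : ℝ) + 1 := by positivity
  have hc0 : 0 < c := by positivity
  set g : ℝ → ℝ := fun x => c * x ^ (-β) with hg
  -- image of (0,1) under g
  have himg : g '' Set.Ioo 0 1 = Set.Ioi c := by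
    ext t
    constructor
    · rintro ⟨x, ⟨hx0, hx1⟩, rfl⟩
      have h1 : 1 < x ^ (-β) :=
        (Real.one_lt_rpow_iff_of_pos hx0).2 (Or.inr ⟨hx1, by linarith⟩)
      have : c < c * x ^ (-β) := by nlinarith
      simpa [hg] using this
    · intro ht
      have ht : c < t := ht
      have ht0 : 0 < t := hc0.trans ht
      have hct0 : 0 < c / t := div_pos hc0 ht0
      have hct1 : c / t < 1 := (div_lt_one ht0).2 ht
      refine ⟨(c / t) ^ (1 / β), ⟨Real.rpow_pos_of_pos hct0 _,
        Real.rpow_lt_one hct0.le hct1 (by positivity)⟩, ?_⟩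
      have h2 : ((c / t) ^ (1 / β)) ^ (-β) = (c / t)⁻¹ := by
        rw [← Real.rpow_mul hct0.le,
          show (1 / β) * (-β) = -1 by field_simp, Real.rpow_neg_one]
      simp only [hg, h2]
      field_simp
  -- injectivity of g on (0,1)
  have hinj : Set.InjOn g (Set.Ioo 0 1) := by
    intro x hx y hy hxy
    have hx0 : (0:ℝ) < x := hx.1
    have hy0 : (0:ℝ) < y := hy.1
    have h3 : x ^ (-β) = y ^ (-β) := by
      have := hxy
      simp only [hg] at this
      exact mul_left_cancel₀ hc0.ne' this
    have h4 : (x ^ (-β)) ^ ((-β)⁻¹) = (y ^ (-β)) ^ ((-β)⁻¹) := by rw [h3]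
    rwa [← Real.rpow_mul hx0.le, ← Real.rpow_mul hy0.le,
      mul_inv_cancel₀ (by simpa using hβ.ne' : (-β) ≠ 0),
      Real.rpow_one, Real.rpow_one] at h4
  -- derivative of g
  have hderiv : ∀ x ∈ Set.Ioo (0:ℝ) 1,
      HasDerivWithinAt g (c * (-β * x ^ (-β - 1))) (Set.Ioo 0 1) x := by
    intro x hx
    exact ((Real.hasDerivAt_rpow_const (Or.inl hx.1.ne')).const_mul c).hasDerivWithinAt
  -- change of variables for uiGamma
  have key : uiGamma (1 - 1 / β) c =
      ∫ x in Set.Ioo (0:ℝ) 1,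
        (β * c ^ (1 - 1 / β)) * (x ^ (-β) * Real.exp (-(c * x ^ (-β)))) := by
    rw [uiGamma, ← himg,
      MeasureTheory.integral_image_eq_integral_abs_deriv_smul measurableSet_Ioo hderiv hinj]
    apply MeasureTheory.setIntegral_congr_fun measurableSet_Ioo
    intro x hx
    have hx0 : (0:ℝ) < x := hx.1
    have hxb1 : (0:ℝ) < x ^ (-β - 1) := Real.rpow_pos_of_pos hx0 _
    have habs : |c * (-β * x ^ (-β - 1))| = c * β * x ^ (-β - 1) := by
      rw [show c * (-β * x ^ (-β - 1)) = -(c * (β * x ^ (-β - 1))) by ring, abs_neg,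
        abs_of_nonneg (by positivity)]
      ring
    have e1 : (c * x ^ (-β)) ^ (1 - 1 / β - 1) = c ^ (-(1 / β)) * x := by
      rw [show (1:ℝ) - 1 / β - 1 = -(1 / β) by ring,
        Real.mul_rpow hc0.le (Real.rpow_pos_of_pos hx0 _).le,
        ← Real.rpow_mul hx0.le, show (-β) * -(1 / β) = 1 by field_simp, Real.rpow_one]
    have e2 : x ^ (-β - 1) * x = x ^ (-β) := by
      have h := (Real.rpow_add hx0 (-β - 1) 1).symm
      rw [Real.rpow_one] at h
      rw [h]
      norm_num
    have e3 : c ^ ((1:ℝ) - 1 / β) = c * c ^ (-(1 / β)) := by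
      rw [show (1:ℝ) - 1 / β = 1 + -(1 / β) by ring, Real.rpow_add hc0, Real.rpow_one]
    simp only [hg, smul_eq_mul]
    rw [habs, e1, e3, ← e2]
    ring
  -- rewrite the LHS integral
  have lhs : (∫ x in (0:ℝ)..1,
      x * (Real.exp (-α * (x ^ (-β) - 1))) ^ r *
        (α * β * Real.exp (-α * (x ^ (-β) - 1)) / x ^ (1 + β))) =
      ∫ x in Set.Ioo (0:ℝ) 1,
        (α * β * Real.exp c) * (x ^ (-β) * Real.exp (-(c * x ^ (-β)))) := by
    rw [intervalIntegral.integral_of_le zero_le_one,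
      MeasureTheory.integral_Ioc_eq_integral_Ioo]
    apply MeasureTheory.setIntegral_congr_fun measurableSet_Ioo
    intro x hx
    have hx0 : (0:ℝ) < x := hx.1
    have hdiv : x / x ^ (1 + β) = x ^ (-β) := by
      rw [Real.rpow_add hx0, Real.rpow_one, Real.rpow_neg hx0.le]
      field_simp
    have h5 : (Real.exp (-α * (x ^ (-β) - 1))) ^ r =
        Real.exp ((r : ℝ) * (-α * (x ^ (-β) - 1))) := (Real.exp_nat_mul _ r).symm
    calc x * (Real.exp (-α * (x ^ (-β) - 1))) ^ r *
          (α * β * Real.exp (-α * (x ^ (-β) - 1)) / x ^ (1 + β))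
        = (α * β) * (x / x ^ (1 + β)) *
          (Real.exp ((r : ℝ) * (-α * (x ^ (-β) - 1))) *
            Real.exp (-α * (x ^ (-β) - 1))) := by rw [h5]; ring
      _ = (α * β * Real.exp c) * (x ^ (-β) * Real.exp (-(c * x ^ (-β)))) := by
          rw [← Real.exp_add, hdiv,
            show (r : ℝ) * (-α * (x ^ (-β) - 1)) + -α * (x ^ (-β) - 1)
              = c + -(c * x ^ (-β)) by rw [hc]; ring,
            Real.exp_add]
          ring
  rw [lhs, key, MeasureTheory.integral_const_mul, MeasureTheory.integral_const_mul]
  have ha : α ^ (1 / β) * α ^ (1 - 1 / β) = α := by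
    rw [← Real.rpow_add hα]; norm_num
  have hb : ((r : ℝ) + 1) ^ (1 / β - 1) * ((r : ℝ) + 1) ^ (1 - 1 / β) = 1 := by
    rw [← Real.rpow_add hr1]; norm_num
  have hcpow : c ^ ((1:ℝ) - 1 / β) = ((r : ℝ) + 1) ^ ((1:ℝ) - 1 / β) * α ^ ((1:ℝ) - 1 / β) := by
    rw [hc, Real.mul_rpow hr1.le hα.le]
  rw [hcpow]
  have : α ^ (1 / β) * ((r : ℝ) + 1) ^ (1 / β - 1) * Real.exp c *
      (β * (((r : ℝ) + 1) ^ ((1:ℝ) - 1 / β) * α ^ ((1:ℝ) - 1 / β))) =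
      (α ^ (1 / β) * α ^ (1 - 1 / β)) *
        (((r : ℝ) + 1) ^ (1 / β - 1) * ((r : ℝ) + 1) ^ (1 - 1 / β)) * (β * Real.exp c) := by
    ring
  rw [show α ^ (1 / β) * ((r : ℝ) + 1) ^ (1 / β - 1) * Real.exp c *
      ((β * (((r : ℝ) + 1) ^ ((1:ℝ) - 1 / β) * α ^ ((1:ℝ) - 1 / β))) *
        ∫ x in Set.Ioo (0:ℝ) 1, x ^ (-β) * Real.exp (-(c * x ^ (-β))))
    = (α ^ (1 / β) * α ^ (1 - 1 / β)) *
        (((r : ℝ) + 1) ^ (1 / β - 1) * ((r : ℝ) + 1) ^ (1 - 1 / β)) * (β * Real.exp c) *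
        ∫ x in Set.Ioo (0:ℝ) 1, x ^ (-β) * Real.exp (-(c * x ^ (-β))) by ring,
    ha, hb]
  ring
end

section
/- Let α > 0 and β > 0, and let X be a random variable with density f(x) = αβ·exp(−α(x^{−β} − 1))/x^{1+β} on (0,1). Then the first L-moment (the mean) is λ_1 = E(X) = ∫_0^1 x·f(x) dx = e^α·α^{1/β}·Γ(1 − 1/β; α), where Γ(s; y) = ∫_y^∞ t^{s−1} e^{−t} dt is the upper incomplete gamma function. -/
/-- **Mean (first L-moment) of the unit-Gompertz distribution.**
For `α, β > 0`, with density `f x = α * β * exp (-α * (x ^ (-β) - 1)) / x ^ (1 + β)`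
on `(0, 1)`, the mean is `λ₁ = ∫_0^1 x * f x dx = e^α * α^(1/β) * Γ(1 - 1/β; α)`. -/
theorem unitGompertz_mean (α β : ℝ) (hα : 0 < α) (hβ : 0 < β)
    (f : ℝ → ℝ)
    (hf : f = fun x => α * β * Real.exp (-α * (x ^ (-β) - 1)) / x ^ (1 + β)) :
    (∫ x in (0:ℝ)..1, x * f x) =
      Real.exp α * α ^ (1 / β) * uiGamma (1 - 1 / β) α := by
  have hβ0 : β ≠ 0 := ne_of_gt hβ
  set φ : ℝ → ℝ := fun x => α * x ^ (-β) with hφ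
  set φ' : ℝ → ℝ := fun x => α * (-β * x ^ (-β - 1)) with hφ'
  have hderiv : ∀ x ∈ Set.Ioo (0:ℝ) 1, HasDerivWithinAt φ (φ' x) (Set.Ioo 0 1) x := by
    intro x hx
    exact ((Real.hasDerivAt_rpow_const (Or.inl (ne_of_gt hx.1))).const_mul α).hasDerivWithinAt
  have hinj : Set.InjOn φ (Set.Ioo (0:ℝ) 1) := by
    have : StrictAntiOn φ (Set.Ioo (0:ℝ) 1) := by
      intro x hx y hy hxy
      exact mul_lt_mul_of_pos_left
        (Real.rpow_lt_rpow_of_neg hx.1 hxy (neg_neg_iff_pos.mpr hβ)) hα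
    exact this.injOn
  have himg : φ '' Set.Ioo (0:ℝ) 1 = Set.Ioi α := by
    ext t
    constructor
    · rintro ⟨x, hx, rfl⟩
      have h1 : 1 < x ^ (-β) :=
        (Real.one_lt_rpow_iff_of_pos hx.1).mpr (Or.inr ⟨hx.2, neg_neg_iff_pos.mpr hβ⟩)
      simpa using (mul_lt_mul_of_pos_left h1 hα)
    · intro ht
      have htα : α < t := ht
      have ht0 : 0 < t := hα.trans htα
      have hd : 0 < α / t := div_pos hα ht0
      have hd1 : α / t < 1 := (div_lt_one ht0).mpr htα
      refine ⟨(α / t) ^ (1 / β), ⟨Real.rpow_pos_of_pos hd _, ?_⟩, ?_⟩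
      · exact Real.rpow_lt_one hd.le hd1 (one_div_pos.mpr hβ)
      · show α * ((α / t) ^ (1 / β)) ^ (-β) = t
        rw [← Real.rpow_mul hd.le]
        have : 1 / β * -β = -1 := by field_simp
        rw [this, Real.rpow_neg_one]
        field_simp
  -- change of variables
  have key := MeasureTheory.integral_image_eq_integral_abs_deriv_smul
    (measurableSet_Ioo) hderiv hinj
    (fun t => t ^ (1 - 1 / β - 1) * Real.exp (-t))
  rw [himg] at key
  have hIoi : uiGamma (1 - 1 / β) α
      = ∫ x in Set.Ioo (0:ℝ) 1,
          |φ' x| • ((φ x) ^ (1 - 1 / β - 1) * Real.exp (-(φ x))) := key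
  rw [hIoi]
  rw [intervalIntegral.integral_of_le (by norm_num : (0:ℝ) ≤ 1),
    MeasureTheory.integral_Ioc_eq_integral_Ioo, ← MeasureTheory.integral_const_mul]
  apply MeasureTheory.setIntegral_congr_fun measurableSet_Ioo
  intro x hx
  have hx0 : 0 < x := hx.1
  have hφx : φ x = α * x ^ (-β) := rfl
  have habs : |φ' x| = α * β * x ^ (-β - 1) := by
    have hp : 0 < α * (β * x ^ (-β - 1)) :=
      mul_pos hα (mul_pos hβ (Real.rpow_pos_of_pos hx0 _))
    simp only [hφ', neg_mul, mul_neg, abs_neg, abs_of_pos hp]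
    ring
  have hpow : (φ x) ^ (1 - 1 / β - 1) = α ^ (-(1/β)) * x := by
    have h1 : (1 : ℝ) - 1 / β - 1 = -(1/β) := by ring
    rw [hφx, h1, Real.mul_rpow hα.le (Real.rpow_pos_of_pos hx0 _).le,
      ← Real.rpow_mul hx0.le]
    have h2 : -β * -(1/β) = 1 := by field_simp
    rw [h2, Real.rpow_one]
  have hfx : x * f x = α * β * Real.exp α * (Real.exp (-(α * x ^ (-β))) * x ^ (-β)) := by
    rw [hf]
    simp only
    have hx1β : x ^ (1 + β) = x * x ^ β := by
      rw [Real.rpow_add hx0, Real.rpow_one]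
    have hxβ : x ^ (-β) = (x ^ β)⁻¹ := by
      rw [Real.rpow_neg hx0.le]
    have hxβpos : (0:ℝ) < x ^ β := Real.rpow_pos_of_pos hx0 _
    rw [hx1β, hxβ]
    rw [show -α * ((x ^ β)⁻¹ - 1) = -(α * (x ^ β)⁻¹) + α by ring, Real.exp_add]
    field_simp
  simp only []
  rw [hfx, smul_eq_mul, habs, hpow, hφx]
  have hαβ : α ^ (1/β) * α ^ (-(1/β)) = 1 := by
    rw [← Real.rpow_add hα]; simp
  have hxx : x ^ (-β - 1) * x = x ^ (-β) := by
    rw [show -β - 1 = -β + (-1) by ring, Real.rpow_add hx0, Real.rpow_neg_one]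
    field_simp
  symm
  calc Real.exp α * α ^ (1 / β) *
        (α * β * x ^ (-β - 1) * (α ^ (-(1/β)) * x * Real.exp (-(α * x ^ (-β)))))
      = (α ^ (1/β) * α ^ (-(1/β))) * (α * β * Real.exp α *
          (Real.exp (-(α * x ^ (-β))) * (x ^ (-β - 1) * x))) := by ring
    _ = α * β * Real.exp α * (Real.exp (-(α * x ^ (-β))) * x ^ (-β)) := by
        rw [hαβ, hxx]; ring
end

section
/- Let α > 0 and β > 0, and let f(x) = αβ·exp(−α(x^{−β} − 1))/x^{1+β} and F(x) = exp(−α(x^{−β} − 1)) on (0,1). Then the second L-moment λ_2 = 2β_1 − β_0, where β_r = ∫_0^1 x·[F(x)]^r·f(x) dx, is given explicitly by λ_2 = 2·α^{1/β}·2^{1/β − 1}·e^{2α}·Γ(1 − 1/β; 2α) − α^{1/β}·e^α·Γ(1 − 1/β; α), where Γ(s; y) = ∫_y^∞ t^{s−1} e^{−t} dt. -/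
lemma key_sub (β c : ℝ) (hβ : 0 < β) (hc : 0 < c) :
    uiGamma (1 - 1/β) c
      = β * c ^ (1 - 1/β) * ∫ x in Set.Ioo (0:ℝ) 1,
          x ^ (-β) * Real.exp (-(c * x ^ (-β))) := by
  have himg : (fun x : ℝ => c * x ^ (-β)) '' Set.Ioo 0 1 = Set.Ioi c := by
    ext t
    constructor
    · rintro ⟨x, ⟨hx0, hx1⟩, rfl⟩
      have h1 : 1 < x ^ (-β) :=
        (Real.one_lt_rpow_iff_of_pos hx0).2 (Or.inr ⟨hx1, by linarith⟩)
      simpa using (mul_lt_mul_of_pos_left h1 hc)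
    · intro ht
      have ht' : c < t := ht
      have ht0 : 0 < t := hc.trans ht'
      have hd : 0 < c / t := div_pos hc ht0
      refine ⟨(c / t) ^ (β⁻¹), ⟨Real.rpow_pos_of_pos hd _,
        Real.rpow_lt_one hd.le (by rw [div_lt_one ht0]; exact ht')
          (by positivity)⟩, ?_⟩
      have h2 : ((c / t) ^ (β⁻¹)) ^ (-β) = (c / t) ^ (β⁻¹ * (-β)) :=
        (Real.rpow_mul hd.le _ _).symm
      have h3 : β⁻¹ * (-β) = -1 := by field_simp
      simp only [h2, h3, Real.rpow_neg_one]
      field_simp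
  have hderiv : ∀ x ∈ Set.Ioo (0:ℝ) 1,
      HasDerivWithinAt (fun x : ℝ => c * x ^ (-β))
        (c * (-β) * x ^ (-β - 1)) (Set.Ioo 0 1) x := by
    intro x hx
    have := (Real.hasDerivAt_rpow_const (x := x) (p := -β) (Or.inl hx.1.ne')).const_mul c
    simpa [mul_assoc] using this.hasDerivWithinAt
  have hinj : Set.InjOn (fun x : ℝ => c * x ^ (-β)) (Set.Ioo 0 1) := by
    intro a ha b hb hab
    by_contra hne
    rcases lt_or_gt_of_ne hne with h | h
    · have h1 := Real.rpow_lt_rpow_of_neg ha.1 h (by linarith : -β < 0)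
      have h2 := mul_lt_mul_of_pos_left h1 hc
      simp only at hab; linarith
    · have h1 := Real.rpow_lt_rpow_of_neg hb.1 h (by linarith : -β < 0)
      have h2 := mul_lt_mul_of_pos_left h1 hc
      simp only at hab; linarith
  have hmain := MeasureTheory.integral_image_eq_integral_abs_deriv_smul
    measurableSet_Ioo hderiv hinj
    (fun t => t ^ (1 - 1/β - 1) * Real.exp (-t))
  rw [himg] at hmain
  rw [uiGamma, hmain, ← MeasureTheory.integral_const_mul]
  apply MeasureTheory.setIntegral_congr_fun measurableSet_Ioo
  intro x hx
  have hx0 : 0 < x := hx.1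
  have habs : |c * (-β) * x ^ (-β - 1)| = c * β * x ^ (-β - 1) := by
    rw [abs_of_nonpos]
    · ring_nf
    · have : (0:ℝ) < x ^ (-β - 1) := Real.rpow_pos_of_pos hx0 _
      nlinarith [mul_pos (mul_pos hc hβ) this]
  have hpow : (c * x ^ (-β)) ^ (1 - 1/β - 1) = c ^ (-(1/β)) * x ^ (-β * -(1/β)) := by
    rw [show (1 - 1/β - 1 : ℝ) = -(1/β) by ring,
      Real.mul_rpow hc.le (Real.rpow_pos_of_pos hx0 _).le,
      ← Real.rpow_mul hx0.le]
  have hβx : -β * -(1/β) = 1 := by field_simp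
  simp only [smul_eq_mul]
  rw [habs, hpow, hβx, Real.rpow_one]
  have h1 : c ^ (1 - 1/β) = c * c ^ (-(1/β)) := by
    rw [show (1 - 1/β:ℝ) = 1 + -(1/β) by ring, Real.rpow_add hc, Real.rpow_one]
  have h2 : x ^ (-β - 1) * x = x ^ (-β) := by
    rw [show (-β - 1:ℝ) = -β + -1 by ring, Real.rpow_add hx0, Real.rpow_neg_one]
    field_simp
  rw [h1]
  linear_combination (β * c * c ^ (-(1/β)) * Real.exp (-(c * x ^ (-β)))) * h2

/-- **Second L-moment of the unit-Gompertz distribution.**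
For `α, β > 0`, with density `f x = α * β * exp (-α * (x ^ (-β) - 1)) / x ^ (1 + β)`
and cdf `F x = exp (-α * (x ^ (-β) - 1))` on `(0, 1)`, the second L-moment
`λ₂ = 2 β₁ - β₀` (where `β_r = ∫_0^1 x * (F x)^r * f x dx`) is
`λ₂ = 2 * α^(1/β) * 2^(1/β - 1) * e^(2α) * Γ(1 - 1/β; 2α)
      - α^(1/β) * e^α * Γ(1 - 1/β; α)`. -/
theorem unitGompertz_second_L_moment (α β : ℝ) (hα : 0 < α) (hβ : 0 < β)
    (f F : ℝ → ℝ)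
    (hf : f = fun x => α * β * Real.exp (-α * (x ^ (-β) - 1)) / x ^ (1 + β))
    (hF : F = fun x => Real.exp (-α * (x ^ (-β) - 1))) :
    2 * (∫ x in (0:ℝ)..1, x * F x * f x) - (∫ x in (0:ℝ)..1, x * f x) =
      2 * α ^ (1 / β) * (2:ℝ) ^ (1 / β - 1) * Real.exp (2 * α) *
          uiGamma (1 - 1 / β) (2 * α) -
        α ^ (1 / β) * Real.exp α * uiGamma (1 - 1 / β) α := by
  subst hf hF
  set p : ℝ := 1 - 1/β with hp
  have h2α : (0:ℝ) < 2 * α := by linarith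
  set I1 : ℝ := ∫ x in Set.Ioo (0:ℝ) 1, x ^ (-β) * Real.exp (-(α * x ^ (-β))) with hI1d
  set I2 : ℝ := ∫ x in Set.Ioo (0:ℝ) 1, x ^ (-β) * Real.exp (-(2 * α * x ^ (-β))) with hI2d
  have hstep1 : (∫ x in (0:ℝ)..1, x * (α * β * Real.exp (-α * (x ^ (-β) - 1)) / x ^ (1 + β)))
      = α * β * Real.exp α * I1 := by
    rw [intervalIntegral.integral_of_le zero_le_one,
      MeasureTheory.integral_Ioc_eq_integral_Ioo, hI1d, ← MeasureTheory.integral_const_mul]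
    apply MeasureTheory.setIntegral_congr_fun measurableSet_Ioo
    intro x hx
    have hx0 : 0 < x := hx.1
    have hdiv : x * (x ^ ((1:ℝ) + β))⁻¹ = x ^ (-β) := by
      rw [show (-β:ℝ) = 1 - (1+β) by ring, Real.rpow_sub hx0, Real.rpow_one, div_eq_mul_inv]
    have hexp : Real.exp (-α * (x ^ (-β) - 1)) = Real.exp α * Real.exp (-(α * x ^ (-β))) := by
      rw [← Real.exp_add]; ring_nf
    simp only [hexp, div_eq_mul_inv]
    linear_combination (α * β * Real.exp α * Real.exp (-(α * x ^ (-β)))) * hdiv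
  have hstep2 : (∫ x in (0:ℝ)..1, x * Real.exp (-α * (x ^ (-β) - 1)) *
        (α * β * Real.exp (-α * (x ^ (-β) - 1)) / x ^ (1 + β)))
      = α * β * Real.exp (2*α) * I2 := by
    rw [intervalIntegral.integral_of_le zero_le_one,
      MeasureTheory.integral_Ioc_eq_integral_Ioo, hI2d, ← MeasureTheory.integral_const_mul]
    apply MeasureTheory.setIntegral_congr_fun measurableSet_Ioo
    intro x hx
    have hx0 : 0 < x := hx.1
    have hdiv : x * (x ^ ((1:ℝ) + β))⁻¹ = x ^ (-β) := by
      rw [show (-β:ℝ) = 1 - (1+β) by ring, Real.rpow_sub hx0, Real.rpow_one, div_eq_mul_inv]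
    have hexp : Real.exp (-α * (x ^ (-β) - 1)) * Real.exp (-α * (x ^ (-β) - 1))
        = Real.exp (2*α) * Real.exp (-(2 * α * x ^ (-β))) := by
      rw [← Real.exp_add, ← Real.exp_add]; ring_nf
    simp only [div_eq_mul_inv]
    linear_combination (α * β * x * (x ^ ((1:ℝ)+β))⁻¹) * hexp +
      (α * β * Real.exp (2*α) * Real.exp (-(2 * α * x ^ (-β)))) * hdiv
  have hk1 := key_sub β α hβ hα
  have hk2 := key_sub β (2*α) hβ h2α
  rw [hstep1, hstep2]
  have hap : (0:ℝ) < α ^ p := Real.rpow_pos_of_pos hα _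
  have h2ap : (0:ℝ) < (2*α) ^ p := Real.rpow_pos_of_pos h2α _
  have hI1e : I1 = uiGamma (1 - 1/β) α / (β * α ^ p) := by
    rw [eq_div_iff (by positivity)]; linarith [hk1]
  have hI2e : I2 = uiGamma (1 - 1/β) (2*α) / (β * (2*α) ^ p) := by
    rw [eq_div_iff (by positivity)]; linarith [hk2]
  rw [hI1e, hI2e]
  have h1 : α ^ (1/β) * α ^ p = α := by
    rw [← Real.rpow_add hα, hp, show (1/β + (1 - 1/β) : ℝ) = 1 by ring, Real.rpow_one]
  have h2 : (2*α) ^ p = 2 ^ p * α ^ p := Real.mul_rpow (by norm_num) hα.le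
  have h3 : (2:ℝ) ^ (1/β - 1) * 2 ^ p = 1 := by
    rw [← Real.rpow_add (by norm_num), hp, show (1/β - 1 + (1 - 1/β) : ℝ) = 0 by ring,
      Real.rpow_zero]
  rw [h2]
  have h2p : (0:ℝ) < (2:ℝ) ^ p := Real.rpow_pos_of_pos (by norm_num) _
  have h4 : α ^ (1/β) * 2 ^ (1/β-1) * (α^p * 2^p) = α := by
    rw [show α ^ (1/β) * 2 ^ (1/β-1) * (α^p * 2^p)
      = (α^(1/β)*α^p) * (2^(1/β-1)*2^p) by ring, h1, h3, mul_one]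
  set G2 := uiGamma (1 - 1/β) (2*α) with hG2
  set G1 := uiGamma (1 - 1/β) α with hG1
  set q1 := α ^ (1/β) with hq1
  set w := (2:ℝ) ^ (1/β - 1) with hw
  set a := α ^ p with ha'
  set b := (2:ℝ) ^ p with hb'
  have hane : a ≠ 0 := hap.ne'
  have hbne : b ≠ 0 := h2p.ne'
  have hβne : β ≠ 0 := hβ.ne'
  field_simp
  linear_combination (-2 * Real.exp (2*α) * G2) * h4
    + (b * Real.exp α * G1) * h1
end

section
/- Let α > 0, β > 0, and γ > 0 with γ ≠ 1. Let f(x) = αβ·exp(−α(x^{−β} − 1))/x^{1+β} on (0,1). Then ∫_0^1 [f(x)]^γ dx = α^{(1−γ)/β}·β^{γ−1}·γ^{−(γ+βγ−1)/β}·e^{αγ}·Γ((γ+βγ−1)/β; αγ), where Γ(s; y) = ∫_y^∞ t^{s−1} e^{−t} dt. Consequently, the Tsallis entropy of the unit-Gompertz distribution is I_T(γ) = (1/(γ−1))·[1 − α^{(1−γ)/β}·β^{γ−1}·γ^{−(γ+βγ−1)/β}·e^{αγ}·Γ((γ+βγ−1)/β; αγ)]. -/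
/-- Change of variables `t = α γ x^(-β)` turning the incomplete gamma integral
into an integral over `(0,1)`. -/
lemma uiGamma_change (α β γ : ℝ) (hα : 0 < α) (hβ : 0 < β) (hγ : 0 < γ) :
    uiGamma ((γ + β * γ - 1) / β) (α * γ) =
      ∫ x in Set.Ioo (0:ℝ) 1,
        |α * γ * (-β * x ^ (-β - 1))| *
          ((α * γ * x ^ (-β)) ^ ((γ + β * γ - 1) / β - 1) *
            Real.exp (-(α * γ * x ^ (-β)))) := by
  have hc : (0:ℝ) < α * γ := mul_pos hα hγ
  have himg : (fun x : ℝ => α * γ * x ^ (-β)) '' Set.Ioo 0 1 = Set.Ioi (α * γ) := by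
    ext t
    constructor
    · rintro ⟨x, ⟨hx0, hx1⟩, rfl⟩
      have h1 : 1 < x ^ (-β) := by
        rw [Real.one_lt_rpow_iff_of_pos hx0]
        exact Or.inr ⟨hx1, neg_neg_of_pos hβ⟩
      have := mul_lt_mul_of_pos_left h1 hc
      simpa using this
    · intro ht
      have ht' : 1 < t / (α * γ) := (one_lt_div hc).2 ht
      refine ⟨(t / (α * γ)) ^ (-(1/β)), ⟨?_, ?_⟩, ?_⟩
      · positivity
      · exact Real.rpow_lt_one_of_one_lt_of_neg ht' (neg_neg_of_pos (by positivity))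
      · show α * γ * ((t / (α * γ)) ^ (-(1/β))) ^ (-β) = t
        rw [← Real.rpow_mul (le_of_lt (div_pos (hc.trans ht) hc)),
          show -(1/β) * (-β) = 1 by field_simp, Real.rpow_one]
        field_simp
  have hinj : Set.InjOn (fun x : ℝ => α * γ * x ^ (-β)) (Set.Ioo 0 1) := by
    intro x ⟨hx0, _⟩ y ⟨hy0, _⟩ h
    have h2 : x ^ (-β) = y ^ (-β) := mul_left_cancel₀ hc.ne' h
    have hb : (-β) ≠ 0 := neg_ne_zero.2 hβ.ne'
    calc x = (x ^ (-β)) ^ (-β)⁻¹ := by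
            rw [← Real.rpow_mul hx0.le, mul_inv_cancel₀ hb, Real.rpow_one]
      _ = (y ^ (-β)) ^ (-β)⁻¹ := by rw [h2]
      _ = y := by rw [← Real.rpow_mul hy0.le, mul_inv_cancel₀ hb, Real.rpow_one]
  have hderiv : ∀ x ∈ Set.Ioo (0:ℝ) 1,
      HasDerivWithinAt (fun x : ℝ => α * γ * x ^ (-β))
        (α * γ * (-β * x ^ (-β - 1))) (Set.Ioo 0 1) x := by
    intro x ⟨hx0, _⟩
    exact ((Real.hasDerivAt_rpow_const (Or.inl hx0.ne')).const_mul (α * γ)).hasDerivWithinAt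
  unfold uiGamma
  rw [← himg,
    MeasureTheory.integral_image_eq_integral_abs_deriv_smul measurableSet_Ioo hderiv hinj]
  simp [smul_eq_mul, mul_assoc]

/-- Pointwise identity between the `γ`-th power of the unit-Gompertz density and
the transformed incomplete-gamma integrand. -/
lemma unitGompertz_pointwise (α β γ : ℝ) (hα : 0 < α) (hβ : 0 < β) (hγ : 0 < γ)
    (x : ℝ) (hx0 : 0 < x) :
    (α * β * Real.exp (-α * (x ^ (-β) - 1)) / x ^ (1 + β)) ^ γ =
      (α ^ ((1 - γ) / β) * β ^ (γ - 1) * γ ^ (-((γ + β * γ - 1) / β)) *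
        Real.exp (α * γ)) *
      (|α * γ * (-β * x ^ (-β - 1))| *
        ((α * γ * x ^ (-β)) ^ ((γ + β * γ - 1) / β - 1) *
          Real.exp (-(α * γ * x ^ (-β))))) := by
  have hX : 0 < x ^ (-β) := Real.rpow_pos_of_pos hx0 _
  have hX1 : 0 < x ^ (-β - 1) := Real.rpow_pos_of_pos hx0 _
  have hXb : 0 < x ^ (1 + β) := Real.rpow_pos_of_pos hx0 _
  have habs : |α * γ * (-β * x ^ (-β - 1))| = α * γ * (β * x ^ (-β - 1)) := by
    rw [show α * γ * (-β * x ^ (-β - 1)) = -(α * γ * (β * x ^ (-β - 1))) by ring,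
      abs_neg, abs_of_pos (by positivity)]
  rw [habs]
  have hL : 0 < α * β * Real.exp (-α * (x ^ (-β) - 1)) / x ^ (1 + β) := by positivity
  have hQ : 0 < α * γ * x ^ (-β) := by positivity
  apply Real.log_injOn_pos (Set.mem_Ioi.2 (by positivity)) (Set.mem_Ioi.2 (by positivity))
  rw [Real.log_rpow hL, Real.log_div (by positivity) hXb.ne',
    Real.log_mul (by positivity) (Real.exp_ne_zero _), Real.log_mul hα.ne' hβ.ne',
    Real.log_exp, Real.log_rpow hx0,
    Real.log_mul (by positivity) (by positivity),
    Real.log_mul (by positivity) (Real.exp_ne_zero _),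
    Real.log_mul (by positivity) (by positivity),
    Real.log_mul (by positivity) (by positivity),
    Real.log_rpow hα, Real.log_rpow hβ, Real.log_rpow hγ, Real.log_exp,
    Real.log_mul (by positivity) (by positivity),
    Real.log_mul (by positivity) (by positivity),
    Real.log_mul hα.ne' hγ.ne',
    Real.log_mul hβ.ne' hX1.ne',
    Real.log_rpow hx0,
    Real.log_mul (by positivity) (Real.exp_ne_zero _),
    Real.log_rpow hQ, Real.log_exp,
    Real.log_mul (by positivity) hX.ne',
    Real.log_mul hα.ne' hγ.ne',
    Real.log_rpow hx0]
  field_simp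
  ring

/-- **Tsallis entropy of the unit-Gompertz distribution.**
For `α, β > 0` and `0 < γ ≠ 1`, with density
`f x = α * β * exp (-α * (x ^ (-β) - 1)) / x ^ (1 + β)` on `(0, 1)`, one has
`∫_0^1 (f x)^γ dx
  = α^((1-γ)/β) * β^(γ-1) * γ^(-(γ+βγ-1)/β) * e^(αγ) * Γ((γ+βγ-1)/β; αγ)`,
and consequently the Tsallis entropy is
`I_T(γ) = (1/(γ-1)) * (1 - ∫_0^1 (f x)^γ dx)` with the integral given by this
closed-form expression. -/
theorem unitGompertz_tsallis_entropy (α β γ : ℝ) (hα : 0 < α) (hβ : 0 < β)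
    (hγ : 0 < γ) (hγ1 : γ ≠ 1)
    (f : ℝ → ℝ)
    (hf : f = fun x => α * β * Real.exp (-α * (x ^ (-β) - 1)) / x ^ (1 + β)) :
    (∫ x in (0:ℝ)..1, (f x) ^ γ) =
      α ^ ((1 - γ) / β) * β ^ (γ - 1) * γ ^ (-((γ + β * γ - 1) / β)) *
        Real.exp (α * γ) * uiGamma ((γ + β * γ - 1) / β) (α * γ) ∧
    1 / (γ - 1) * (1 - ∫ x in (0:ℝ)..1, (f x) ^ γ) =
      1 / (γ - 1) *
        (1 - α ^ ((1 - γ) / β) * β ^ (γ - 1) * γ ^ (-((γ + β * γ - 1) / β)) *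
          Real.exp (α * γ) * uiGamma ((γ + β * γ - 1) / β) (α * γ)) := by
  have hmain : (∫ x in (0:ℝ)..1, (f x) ^ γ) =
      α ^ ((1 - γ) / β) * β ^ (γ - 1) * γ ^ (-((γ + β * γ - 1) / β)) *
        Real.exp (α * γ) * uiGamma ((γ + β * γ - 1) / β) (α * γ) := by
    rw [intervalIntegral.integral_of_le zero_le_one,
      MeasureTheory.integral_Ioc_eq_integral_Ioo]
    have hcong : Set.EqOn (fun x => (f x) ^ γ)
        (fun x =>
          (α ^ ((1 - γ) / β) * β ^ (γ - 1) * γ ^ (-((γ + β * γ - 1) / β)) *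
            Real.exp (α * γ)) *
          (|α * γ * (-β * x ^ (-β - 1))| *
            ((α * γ * x ^ (-β)) ^ ((γ + β * γ - 1) / β - 1) *
              Real.exp (-(α * γ * x ^ (-β)))))) (Set.Ioo 0 1) := by
      intro x hx
      simp only [hf]
      exact unitGompertz_pointwise α β γ hα hβ hγ x hx.1
    rw [MeasureTheory.setIntegral_congr_fun measurableSet_Ioo hcong,
      MeasureTheory.integral_const_mul, ← uiGamma_change α β γ hα hβ hγ]
  exact ⟨hmain, by rw [hmain]⟩
end

section
/- Let α > 0, β > 0, and let γ < 2 with γ ≠ 1. Let f(x) = αβ·exp(−α(x^{−β} − 1))/x^{1+β} on (0,1). Then ∫_0^1 [f(x)]^{2−γ} dx = α^{(γ−1)/β}·β^{1−γ}·(2−γ)^{−((2−γ)+β(2−γ)−1)/β}·e^{α(2−γ)}·Γ(((1+β)(1−γ))/β + 1; α(2−γ)), where Γ(s; y) = ∫_y^∞ t^{s−1} e^{−t} dt. Consequently, the Mathai–Haubold entropy of the unit-Gompertz distribution is I_MH(γ) = (1/(γ−1))·[∫_0^1 [f(x)]^{2−γ} dx − 1] with the integral given by the above closed-form expression. -/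
open MeasureTheory Set Real in
/-- **Mathai–Haubold entropy of the unit-Gompertz distribution.**
For `α, β > 0` and `γ < 2` with `γ ≠ 1`, with density
`f x = α * β * exp (-α * (x ^ (-β) - 1)) / x ^ (1 + β)` on `(0, 1)`, one has
`∫_0^1 (f x)^(2-γ) dx
  = α^((γ-1)/β) * β^(1-γ) * (2-γ)^(-((2-γ)+β(2-γ)-1)/β) * e^(α(2-γ))
      * Γ((1+β)(1-γ)/β + 1; α(2-γ))`,
and consequently the Mathai–Haubold entropy is
`I_MH(γ) = (1/(γ-1)) * (∫_0^1 (f x)^(2-γ) dx - 1)` with the integral given by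
this closed-form expression. -/
theorem unitGompertz_mathai_haubold_entropy (α β γ : ℝ) (hα : 0 < α) (hβ : 0 < β)
    (hγ2 : γ < 2) (hγ1 : γ ≠ 1)
    (f : ℝ → ℝ)
    (hf : f = fun x => α * β * Real.exp (-α * (x ^ (-β) - 1)) / x ^ (1 + β)) :
    (∫ x in (0:ℝ)..1, (f x) ^ (2 - γ)) =
      α ^ ((γ - 1) / β) * β ^ (1 - γ) *
        (2 - γ) ^ (-(((2 - γ) + β * (2 - γ) - 1) / β)) * Real.exp (α * (2 - γ)) *
        uiGamma ((1 + β) * (1 - γ) / β + 1) (α * (2 - γ)) ∧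
    1 / (γ - 1) * ((∫ x in (0:ℝ)..1, (f x) ^ (2 - γ)) - 1) =
      1 / (γ - 1) *
        (α ^ ((γ - 1) / β) * β ^ (1 - γ) *
            (2 - γ) ^ (-(((2 - γ) + β * (2 - γ) - 1) / β)) * Real.exp (α * (2 - γ)) *
            uiGamma ((1 + β) * (1 - γ) / β + 1) (α * (2 - γ)) - 1) := by
  have hq0 : (0:ℝ) < 2 - γ := by linarith
  set q : ℝ := 2 - γ with hqdef
  set s : ℝ := (1 + β) * (1 - γ) / β + 1 with hsdef
  have hβ' : β ≠ 0 := hβ.ne'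
  have hc : (0:ℝ) < α * q := mul_pos hα hq0
  -- image of (0,1) under x ↦ x ^ (-β)
  have himg : (fun x : ℝ => x ^ (-β)) '' Ioo 0 1 = Ioi 1 := by
    ext u
    simp only [mem_image, mem_Ioo, mem_Ioi]
    constructor
    · rintro ⟨x, ⟨hx0, hx1⟩, rfl⟩
      rw [Real.one_lt_rpow_iff_of_pos hx0]
      exact Or.inr ⟨hx1, neg_neg_iff_pos.mpr hβ⟩
    · intro hu
      have hu0 : (0:ℝ) < u := lt_trans one_pos hu
      refine ⟨u ^ (-β⁻¹), ⟨Real.rpow_pos_of_pos hu0 _,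
        Real.rpow_lt_one_of_one_lt_of_neg hu (by simp [hβ])⟩, ?_⟩
      rw [← Real.rpow_mul hu0.le, neg_mul_neg, inv_mul_cancel₀ hβ', Real.rpow_one]
  have hinj : InjOn (fun x : ℝ => x ^ (-β)) (Ioo 0 1) :=
    (Real.rpow_left_injOn (neg_ne_zero.mpr hβ')).mono fun x hx => le_of_lt hx.1
  -- change of variables
  have hcv : (∫ u in Ioi (1:ℝ), u ^ (s - 1) * Real.exp (-(α * q * u)))
      = ∫ x in Ioo (0:ℝ) 1, |(-β) * x ^ (-β - 1)| •
          ((x ^ (-β)) ^ (s - 1) * Real.exp (-(α * q * x ^ (-β)))) := by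
    rw [← himg]
    exact integral_image_eq_integral_abs_deriv_smul measurableSet_Ioo
      (fun x hx => (Real.hasDerivAt_rpow_const (Or.inl hx.1.ne')).hasDerivWithinAt) hinj _
  -- pointwise identity on (0,1)
  have hpt : ∀ x ∈ Ioo (0:ℝ) 1,
      (f x) ^ q = (α ^ q * β ^ (q - 1) * Real.exp (α * q)) *
        (|(-β) * x ^ (-β - 1)| •
          ((x ^ (-β)) ^ (s - 1) * Real.exp (-(α * q * x ^ (-β))))) := by
    intro x hx
    have hx0 : 0 < x := hx.1
    have habs : |(-β) * x ^ (-β - 1)| = β * x ^ (-β - 1) := by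
      rw [abs_mul, abs_neg, abs_of_pos hβ, abs_of_pos (Real.rpow_pos_of_pos hx0 _)]
    rw [hf, smul_eq_mul, habs]
    beta_reduce
    have hnum : (0:ℝ) ≤ α * β * Real.exp (-α * (x ^ (-β) - 1)) :=
      mul_nonneg (mul_nonneg hα.le hβ.le) (Real.exp_pos _).le
    rw [div_eq_mul_inv, ← Real.rpow_neg hx0.le,
      Real.mul_rpow hnum (Real.rpow_pos_of_pos hx0 _).le,
      Real.mul_rpow (mul_nonneg hα.le hβ.le) (Real.exp_pos _).le,
      Real.mul_rpow hα.le hβ.le, ← Real.exp_mul,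
      ← Real.rpow_mul hx0.le, ← Real.rpow_mul hx0.le]
    have he : -α * (x ^ (-β) - 1) * q = α * q + (-(α * q * x ^ (-β))) := by ring
    have hβq : β ^ q = β ^ (q - 1) * β := by
      rw [← Real.rpow_add_one hβ']; ring_nf
    have hxexp : x ^ (-(1 + β) * q) = x ^ (-β - 1) * x ^ (-β * (s - 1)) := by
      rw [← Real.rpow_add hx0]
      congr 1
      have hbs : β * (s - 1) = (1 + β) * (1 - γ) := by
        rw [hsdef]; field_simp; ring
      rw [hqdef]; linear_combination hbs
    rw [he, Real.exp_add, hβq, hxexp]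
    ring
  -- incomplete gamma side
  have h1 : ∀ u ∈ Ioi (1:ℝ), (fun t : ℝ => t ^ (s-1) * Real.exp (-t)) (α * q * u)
      = (α * q) ^ (s - 1) * (u ^ (s - 1) * Real.exp (-(α * q * u))) := by
    intro u hu
    simp only
    rw [Real.mul_rpow hc.le (le_of_lt (lt_trans one_pos hu))]
    ring
  have h2 := integral_comp_mul_left_Ioi (fun t : ℝ => t ^ (s-1) * Real.exp (-t)) 1 hc
  rw [setIntegral_congr_fun measurableSet_Ioi h1, integral_const_mul] at h2
  simp only [smul_eq_mul, mul_one] at h2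
  have hA : ((α * q) ^ (s-1) : ℝ) ≠ 0 := (Real.rpow_pos_of_pos hc _).ne'
  have hsplit : ((α * q) ^ (s-1) : ℝ)⁻¹ * (α * q)⁻¹ = (α * q) ^ (-s) := by
    rw [← Real.rpow_neg hc.le, ← Real.rpow_neg_one (α * q), ← Real.rpow_add hc]
    ring_nf
  have hIoi : (∫ u in Ioi (1:ℝ), u ^ (s - 1) * Real.exp (-(α * q * u)))
      = (α * q) ^ (-s) * uiGamma s (α * q) := by
    calc (∫ u in Ioi (1:ℝ), u ^ (s - 1) * Real.exp (-(α * q * u)))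
        = ((α * q) ^ (s-1))⁻¹ * ((α * q) ^ (s-1) *
            ∫ u in Ioi (1:ℝ), u ^ (s - 1) * Real.exp (-(α * q * u))) := by
          rw [inv_mul_cancel_left₀ hA]
      _ = ((α * q) ^ (s-1))⁻¹ * ((α * q)⁻¹ * uiGamma s (α * q)) := by
          rw [h2]; rfl
      _ = (α * q) ^ (-s) * uiGamma s (α * q) := by rw [← mul_assoc, hsplit]
  -- main integral computation
  have key : (∫ x in (0:ℝ)..1, (f x) ^ q) =
      α ^ ((γ - 1) / β) * β ^ (1 - γ) * q ^ (-((q + β * q - 1) / β)) *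
        Real.exp (α * q) * uiGamma s (α * q) := by
    rw [intervalIntegral.integral_of_le zero_le_one,
      MeasureTheory.integral_Ioc_eq_integral_Ioo,
      setIntegral_congr_fun measurableSet_Ioo hpt, integral_const_mul, ← hcv, hIoi]
    have hexp : -((q + β * q - 1) / β) = -s := by
      rw [hsdef, hqdef]; field_simp; ring
    rw [hexp, Real.mul_rpow hα.le hq0.le]
    have hαe : α ^ q * α ^ (-s) = α ^ ((γ - 1) / β) := by
      rw [← Real.rpow_add hα]
      congr 1
      rw [hsdef, hqdef]; field_simp; ring
    have hβe : β ^ (q - 1) = β ^ (1 - γ) := by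
      rw [hqdef]; ring_nf
    calc α ^ q * β ^ (q - 1) * Real.exp (α * q) * (α ^ (-s) * q ^ (-s) * uiGamma s (α * q))
        = (α ^ q * α ^ (-s)) * β ^ (q - 1) * q ^ (-s) * Real.exp (α * q) *
            uiGamma s (α * q) := by ring
      _ = _ := by rw [hαe, hβe]
  exact ⟨key, by rw [key]⟩
end
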